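/- arXiv:2403.12355 — 6 statements merged into one kernel-verified Lean document; each statement's English description precedes it below -/
import Mathlib

section
/- Let G be a finite nilpotent group of nilpotency class L generated by a symmetric set S ⊆ G. Then Diam_S(G₂) ≤ ∑_{i=2}^{L} Diam_S(G_i/G_{i+1}), where G₂ = [G,G] and (G_i) is the lower central series of G. -/
open scoped BigOperators
open scoped Classical

noncomputable section

/-- A subset of a group is symmetric if it is closed under taking inverses. -/
def SymmSet {G : Type*} [Group G] (S : Set G) : Prop := ∀ s : G, s ∈ S ↔ s⁻¹ ∈ S

/-- The word length of `g` with respect to `S`: the least `n` such that `g` is a product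
of a list of `n` elements of `S`. -/
def wordLength {G : Type*} [Group G] (S : Set G) (g : G) : ℕ :=
  sInf {n | ∃ l : List G, (∀ x ∈ l, x ∈ S) ∧ l.length = n ∧ l.prod = g}

/-- The diameter of a subset `H` of `G` in the Cayley graph of `G` w.r.t. `S`. -/
def setDiam {G : Type*} [Group G] (S H : Set G) : ℕ := sSup (wordLength S '' H)

/-- `Diam_S(H/N)`: the least `D` such that every `h ∈ H` can be written as `h = w * u` with
`u ∈ N` and `w` a product of at most `D` elements of `S`. -/
def quotDiam {G : Type*} [Group G] (S H N : Set G) : ℕ :=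
  sInf {D | ∀ h ∈ H, ∃ l : List G, (∀ x ∈ l, x ∈ S) ∧ l.length ≤ D ∧ ∃ u ∈ N, h = l.prod * u}

/-- `G` has rank `r`: `r` is the least `n` such that some set of `n` elements of `G`
together with their inverses generates `G`. -/
def HasRank (G : Type*) [Group G] (r : ℕ) : Prop :=
  IsLeast {n | ∃ T : Finset G, T.card = n ∧ Subgroup.closure ((T : Set G) ∪ (T : Set G)⁻¹) = ⊤} r

/-- `G` is nilpotent of nilpotency class exactly `L`; with the paper's indexing
`G_i := lowerCentralSeries G (i-1)`, this says `G_{L+1} = {1} ≠ G_L`. -/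
def NilpotencyClassEq (G : Type*) [Group G] (L : ℕ) : Prop :=
  (⊤ : Subgroup G).lowerCentralSeries L = ⊥ ∧ (⊤ : Subgroup G).lowerCentralSeries (L - 1) ≠ ⊥

/-- Transition matrix of the simple random walk on the Cayley graph `Cay(G,S)`. -/
def transMatrix {G : Type*} [Group G] [Fintype G] (S : Set G) : Matrix G G ℝ :=
  fun x y => if x⁻¹ * y ∈ S then ((S.ncard : ℝ))⁻¹ else 0

/-- Heat kernel `P_t = exp (t (K - I))` of the simple random walk on `Cay(G,S)`. -/
def heatKernel {G : Type*} [Group G] [Fintype G] (S : Set G) (t : ℝ) : Matrix G G ℝ :=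
  NormedSpace.exp (t • (transMatrix S - 1))

/-- Transition matrix of the projected walk on `G ⧸ N`. -/
def quotTransMatrix {G : Type*} [Group G] (S : Set G) (N : Subgroup G) [N.Normal] :
    Matrix (G ⧸ N) (G ⧸ N) ℝ :=
  fun C C' => (({s ∈ S | C * (QuotientGroup.mk s : G ⧸ N) = C'}).ncard : ℝ) / (S.ncard : ℝ)

/-- Heat kernel of the projected walk on `G ⧸ N`. -/
def quotHeatKernel {G : Type*} [Group G] [Fintype G] (S : Set G) (N : Subgroup G) [N.Normal]
    (t : ℝ) : Matrix (G ⧸ N) (G ⧸ N) ℝ :=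
  letI : Fintype (G ⧸ N) := Fintype.ofFinite _
  NormedSpace.exp (t • (quotTransMatrix S N - 1))

/-- `ε`-mixing time of the simple random walk on `Cay(G,S)` started at the identity. -/
def mixingTime {G : Type*} [Group G] [Fintype G] (S : Set G) (ε : ℝ) : ℝ :=
  sInf {t : ℝ | 0 ≤ t ∧ (∑ y : G, |heatKernel S t 1 y - (Fintype.card G : ℝ)⁻¹|) / 2 ≤ ε}

/-- `ε`-mixing time of the projected walk on `G ⧸ N` started at the identity coset. -/
def quotMixingTime {G : Type*} [Group G] [Fintype G] (S : Set G) (N : Subgroup G) [N.Normal]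
    (ε : ℝ) : ℝ :=
  letI : Fintype (G ⧸ N) := Fintype.ofFinite _
  sInf {t : ℝ | 0 ≤ t ∧
    (∑ C : G ⧸ N, |quotHeatKernel S N t 1 C - (Nat.card (G ⧸ N) : ℝ)⁻¹|) / 2 ≤ ε}

/-- Second-largest eigenvalue of a symmetric stochastic matrix, via the variational
characterization over mean-zero functions. -/
def secondEig {X : Type*} [Fintype X] (K : Matrix X X ℝ) : ℝ :=
  sSup {r : ℝ | ∃ f : X → ℝ, f ≠ 0 ∧ (∑ x, f x) = 0 ∧
    r = (∑ x, ∑ y, f x * K x y * f y) / (∑ x, (f x) ^ 2)}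

/-- Relaxation time `1/(1-λ)`. -/
def relaxTime {X : Type*} [Fintype X] (K : Matrix X X ℝ) : ℝ := 1 / (1 - secondEig K)

/-- Relaxation time of the projected walk on `G ⧸ N`. -/
def quotRelaxTime {G : Type*} [Group G] [Fintype G] (S : Set G) (N : Subgroup G) [N.Normal] : ℝ :=
  letI : Fintype (G ⧸ N) := Fintype.ofFinite _
  relaxTime (quotTransMatrix S N)

/-- The paper's commutator `[x,y] = x⁻¹ y⁻¹ x y`. -/
def pcomm {G : Type*} [Group G] (x y : G) : G := x⁻¹ * y⁻¹ * x * y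

/-- Iterated commutator `ρ(x, y₁, …, y_k) = [⋯[[x,y₁],y₂]⋯, y_k]`. -/
def rho {G : Type*} [Group G] (x : G) (l : List G) : G := l.foldl pcomm x

/-- Word length in `G` modulo `N`: the least `n` such that `g = w * u` with `u ∈ N` and
`w` a product of `n` elements of `S`. -/
def quotLength {G : Type*} [Group G] (S N : Set G) (g : G) : ℕ :=
  sInf {n | ∃ l : List G, (∀ x ∈ l, x ∈ S) ∧ l.length = n ∧ ∃ u ∈ N, g = l.prod * u}



theorem aux_exists_word {G : Type*} [Group G] (S : Set G) (hS : SymmSet S)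
    (hgen : Subgroup.closure S = ⊤) (g : G) :
    ∃ l : List G, (∀ x ∈ l, x ∈ S) ∧ l.prod = g := by
  have hg : g ∈ Subgroup.closure S := by rw [hgen]; trivial
  induction hg using Subgroup.closure_induction with
  | mem s hs => exact ⟨[s], by simpa using hs, by simp⟩
  | one => exact ⟨[], by simp, by simp⟩
  | mul x y _ _ hx hy =>
      obtain ⟨l1, h1, p1⟩ := hx
      obtain ⟨l2, h2, p2⟩ := hy
      refine ⟨l1 ++ l2, ?_, by simp [p1, p2]⟩
      intro x hx
      rcases List.mem_append.1 hx with h | h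
      exacts [h1 x h, h2 x h]
  | inv x _ hx =>
      obtain ⟨l, h1, p1⟩ := hx
      refine ⟨(l.map Inv.inv).reverse, ?_, ?_⟩
      · intro y hy
        simp only [List.mem_reverse, List.mem_map] at hy
        obtain ⟨z, hz, rfl⟩ := hy
        exact (hS z).1 (h1 z hz)
      · rw [← List.prod_inv_reverse, p1]

/-- `Diam_S(G₂) ≤ ∑_{i=2}^{L} Diam_S(G_i/G_{i+1})`, where
`G_i = lowerCentralSeries G (i-1)`. -/
theorem diam_commutator_le_sum_quotient_diams (G : Type*) [Group G] [Fintype G] (L : ℕ)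
    (hL : NilpotencyClassEq G L) (S : Set G) (hS : SymmSet S)
    (hgen : Subgroup.closure S = ⊤) :
    setDiam S (commutator G : Set G) ≤
      ∑ i ∈ Finset.Icc 2 L,
        quotDiam S ((⊤ : Subgroup G).lowerCentralSeries (i - 1) : Set G) ((⊤ : Subgroup G).lowerCentralSeries i : Set G) := by
  -- key: any g in lcs k can be written as a word of bounded length
  have key : ∀ n k : ℕ, L ≤ k + n → ∀ g : G, g ∈ (⊤ : Subgroup G).lowerCentralSeries k →
      ∃ l : List G, (∀ x ∈ l, x ∈ S) ∧
        l.length ≤ ∑ i ∈ Finset.Icc (k + 1) L,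
          quotDiam S ((⊤ : Subgroup G).lowerCentralSeries (i - 1) : Set G)
            ((⊤ : Subgroup G).lowerCentralSeries i : Set G) ∧ l.prod = g := by
    intro n
    induction n with
    | zero =>
        intro k hk g hg
        have hbot : (⊤ : Subgroup G).lowerCentralSeries k = ⊥ := by
          have := Subgroup.lowerCentralSeries_antitone (⊤ : Subgroup G) (by simpa using hk)
          rw [hL.1] at this
          exact le_bot_iff.mp this
        rw [hbot, Subgroup.mem_bot] at hg
        exact ⟨[], by simp, by simp, by simp [hg]⟩
    | succ n ih =>
        intro k hk g hg
        by_cases hkL : L ≤ k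
        · have hbot : (⊤ : Subgroup G).lowerCentralSeries k = ⊥ := by
            have := Subgroup.lowerCentralSeries_antitone (⊤ : Subgroup G) hkL
            rw [hL.1] at this
            exact le_bot_iff.mp this
          rw [hbot, Subgroup.mem_bot] at hg
          exact ⟨[], by simp, by simp, by simp [hg]⟩
        · push_neg at hkL
          -- quotDiam set is nonempty, so its sInf is a member
          have hne : {D | ∀ h ∈ ((⊤ : Subgroup G).lowerCentralSeries k : Set G), ∃ l : List G,
              (∀ x ∈ l, x ∈ S) ∧ l.length ≤ D ∧
              ∃ u ∈ ((⊤ : Subgroup G).lowerCentralSeries (k + 1) : Set G), h = l.prod * u}.Nonempty := by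
            choose f hf1 hf2 using aux_exists_word S hS hgen
            refine ⟨Finset.univ.sup fun g => (f g).length, ?_⟩
            intro h _
            exact ⟨f h, hf1 h,
              Finset.le_sup (f := fun g => (f g).length) (Finset.mem_univ h), 1,
              Subgroup.one_mem _, by simp [hf2 h]⟩
          have hDmem : ∀ h ∈ ((⊤ : Subgroup G).lowerCentralSeries k : Set G), ∃ l : List G,
              (∀ x ∈ l, x ∈ S) ∧
              l.length ≤ quotDiam S ((⊤ : Subgroup G).lowerCentralSeries k : Set G)
                ((⊤ : Subgroup G).lowerCentralSeries (k + 1) : Set G) ∧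
              ∃ u ∈ ((⊤ : Subgroup G).lowerCentralSeries (k + 1) : Set G), h = l.prod * u :=
            Nat.sInf_mem hne
          obtain ⟨l, hl1, hl2, u, hu, hgu⟩ := hDmem g hg
          obtain ⟨l', hl'1, hl'2, hl'3⟩ := ih (k + 1) (by omega) u hu
          refine ⟨l ++ l', ?_, ?_, by simp [hl'3, ← hgu]⟩
          · intro x hx
            rcases List.mem_append.1 hx with h | h
            exacts [hl1 x h, hl'1 x h]
          · have hsplit : Finset.Icc (k + 1) L =
                insert (k + 1) (Finset.Icc (k + 2) L) := by
              ext j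
              simp only [Finset.mem_Icc, Finset.mem_insert]
              omega
            rw [List.length_append, hsplit, Finset.sum_insert (by simp)]
            have heq : k + 1 - 1 = k := by omega
            rw [heq]
            have hee : (∑ i ∈ Finset.Icc (k + 1 + 1) L,
                quotDiam S (((⊤ : Subgroup G).lowerCentralSeries (i - 1)) : Set G)
                  (((⊤ : Subgroup G).lowerCentralSeries i) : Set G)) =
                ∑ x ∈ Finset.Icc (k + 2) L,
                quotDiam S (((⊤ : Subgroup G).lowerCentralSeries (x - 1)) : Set G)
                  (((⊤ : Subgroup G).lowerCentralSeries x) : Set G) := rfl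
            omega
  -- conclude
  rcases (commutator G : Set G).eq_empty_or_nonempty with he | hne2
  · simp [setDiam, he]
  · apply csSup_le (hne2.image _)
    rintro b ⟨g, hg, rfl⟩
    have hg1 : g ∈ (⊤ : Subgroup G).lowerCentralSeries 1 := by
      rwa [Subgroup.top_lowerCentralSeries_one]
    obtain ⟨l, h1, h2, h3⟩ := key L 1 (by omega) g hg1
    have : wordLength S g ≤ l.length := Nat.sInf_le ⟨l, h1, rfl, h3⟩
    calc wordLength S g ≤ l.length := this
      _ ≤ _ := by
          refine h2.trans (le_of_eq ?_)
          rfl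


end
end

section
/- For every integer L ≥ 2 there exists a constant C > 0 (depending only on L) such that the following holds: for every finite nilpotent group G of nilpotency class L, every symmetric generating set S ⊆ G, and every R ⊆ S containing exactly one element of {s, s⁻¹} for each s ∈ S, if Diam_S(G_ab) ≥ C·|R|^{4L}, then Diam_S(G₂) ≤ C·Diam_S(G_ab)^{3/4}, where G₂ = [G,G] and Diam_S(G_ab) := Diam_S(G₁/G₂). -/
open scoped BigOperators
open scoped Classical

noncomputable section

open scoped commutatorElement
open scoped IsMulCommutative

namespace DiamAux
variable {G : Type*} [Group G]

variable {G : Type*} [Group G]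

/-- If all commutators of `u` land in `N`, then `u` becomes central mod `N`. -/
lemma mk_central {N : Subgroup G} [N.Normal] {u : G}
    (hu : ∀ g : G, ⁅u, g⁆ ∈ N) :
    (QuotientGroup.mk u : G ⧸ N) ∈ Subgroup.center (G ⧸ N) := by
  rw [Subgroup.mem_center_iff]
  intro q
  induction q using QuotientGroup.induction_on with
  | H g =>
    show QuotientGroup.mk (g * u) = QuotientGroup.mk (u * g)
    rw [QuotientGroup.eq]
    have : (g * u)⁻¹ * (u * g) = ⁅u⁻¹, g⁻¹⁆ := by
      rw [commutatorElement_def]; group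
    rw [this]
    have h1 : ⁅u, g⁻¹⁆ ∈ N := hu g⁻¹
    have h2 : ⁅g⁻¹, u⁆ ∈ N := by
      have := commutatorElement_inv u g⁻¹
      rw [← this]; exact N.inv_mem h1
    have : ⁅u⁻¹, g⁻¹⁆ = u⁻¹ * ⁅g⁻¹, u⁆ * u := by
      rw [commutatorElement_def]; group
    rw [this]
    simpa using (Subgroup.Normal.conj_mem ‹N.Normal› _ h2 u⁻¹)

lemma mk_mul_left {N : Subgroup G} [N.Normal] (a b s : G)
    (hb : (QuotientGroup.mk ⁅b, s⁆ : G ⧸ N) ∈ Subgroup.center (G ⧸ N)) :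
    (QuotientGroup.mk ⁅a * b, s⁆ : G ⧸ N)
      = QuotientGroup.mk ⁅a, s⁆ * QuotientGroup.mk ⁅b, s⁆ := by
  have key : ⁅a * b, s⁆ = a * ⁅b, s⁆ * a⁻¹ * ⁅a, s⁆ := by
    simp only [commutatorElement_def]; group
  have hcomm := Subgroup.mem_center_iff.mp hb
  calc (QuotientGroup.mk ⁅a * b, s⁆ : G ⧸ N)
      = QuotientGroup.mk a * QuotientGroup.mk ⁅b, s⁆ * (QuotientGroup.mk a)⁻¹
          * QuotientGroup.mk ⁅a, s⁆ := by
        rw [key]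
        simp [QuotientGroup.mk_mul, QuotientGroup.mk_inv]
    _ = QuotientGroup.mk ⁅b, s⁆ * QuotientGroup.mk ⁅a, s⁆ := by
        rw [hcomm (QuotientGroup.mk a)]; group
    _ = QuotientGroup.mk ⁅a, s⁆ * QuotientGroup.mk ⁅b, s⁆ := by
        rw [hcomm (QuotientGroup.mk ⁅a, s⁆)]

lemma mk_mul_right {N : Subgroup G} [N.Normal] (c g h : G)
    (hh : (QuotientGroup.mk ⁅c, h⁆ : G ⧸ N) ∈ Subgroup.center (G ⧸ N)) :
    (QuotientGroup.mk ⁅c, g * h⁆ : G ⧸ N)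
      = QuotientGroup.mk ⁅c, g⁆ * QuotientGroup.mk ⁅c, h⁆ := by
  have key : ⁅c, g * h⁆ = ⁅c, g⁆ * (g * ⁅c, h⁆ * g⁻¹) := by
    simp only [commutatorElement_def]; group
  have hcomm := Subgroup.mem_center_iff.mp hh
  calc (QuotientGroup.mk ⁅c, g * h⁆ : G ⧸ N)
      = QuotientGroup.mk ⁅c, g⁆ * (QuotientGroup.mk g * QuotientGroup.mk ⁅c, h⁆
          * (QuotientGroup.mk g)⁻¹) := by
        rw [key]; simp [QuotientGroup.mk_mul, QuotientGroup.mk_inv]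
    _ = QuotientGroup.mk ⁅c, g⁆ * QuotientGroup.mk ⁅c, h⁆ := by
        rw [hcomm (QuotientGroup.mk g)]; group

lemma mk_inv_left {N : Subgroup G} [N.Normal] (a s : G)
    (ha : (QuotientGroup.mk ⁅a, s⁆ : G ⧸ N) ∈ Subgroup.center (G ⧸ N))
    (ha' : (QuotientGroup.mk ⁅a⁻¹, s⁆ : G ⧸ N) ∈ Subgroup.center (G ⧸ N)) :
    (QuotientGroup.mk ⁅a⁻¹, s⁆ : G ⧸ N) = (QuotientGroup.mk ⁅a, s⁆ : G ⧸ N)⁻¹ := by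
  have h1 : (QuotientGroup.mk ⁅a⁻¹ * a, s⁆ : G ⧸ N)
      = QuotientGroup.mk ⁅a⁻¹, s⁆ * QuotientGroup.mk ⁅a, s⁆ := mk_mul_left _ _ _ ha
  simp only [inv_mul_cancel] at h1
  have : (QuotientGroup.mk ⁅(1 : G), s⁆ : G ⧸ N) = 1 := by simp
  rw [this] at h1
  exact eq_inv_of_mul_eq_one_left h1.symm

lemma mk_inv_right {N : Subgroup G} [N.Normal] (c g : G)
    (hg : (QuotientGroup.mk ⁅c, g⁆ : G ⧸ N) ∈ Subgroup.center (G ⧸ N))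
    (hg' : (QuotientGroup.mk ⁅c, g⁻¹⁆ : G ⧸ N) ∈ Subgroup.center (G ⧸ N)) :
    (QuotientGroup.mk ⁅c, g⁻¹⁆ : G ⧸ N) = (QuotientGroup.mk ⁅c, g⁆ : G ⧸ N)⁻¹ := by
  have h1 : (QuotientGroup.mk ⁅c, g⁻¹ * g⁆ : G ⧸ N)
      = QuotientGroup.mk ⁅c, g⁻¹⁆ * QuotientGroup.mk ⁅c, g⁆ := mk_mul_right _ _ _ hg
  simp only [inv_mul_cancel] at h1
  have : (QuotientGroup.mk ⁅c, (1 : G)⁆ : G ⧸ N) = 1 := by simp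
  rw [this] at h1
  exact eq_inv_of_mul_eq_one_left h1.symm

section pows

variable {N : Subgroup G} [N.Normal]

lemma mk_pow_left (a s : G)
    (hall : ∀ b : G, (QuotientGroup.mk ⁅b, s⁆ : G ⧸ N) ∈ Subgroup.center (G ⧸ N)) :
    ∀ n : ℕ, (QuotientGroup.mk ⁅a ^ n, s⁆ : G ⧸ N) = (QuotientGroup.mk ⁅a, s⁆ : G ⧸ N) ^ n := by
  intro n
  induction n with
  | zero => simp
  | succ n ih =>
    rw [pow_succ, mk_mul_left (a ^ n) a s (hall a), ih, pow_succ]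

lemma mk_pow_right (c s : G)
    (hall : ∀ g : G, (QuotientGroup.mk ⁅c, g⁆ : G ⧸ N) ∈ Subgroup.center (G ⧸ N)) :
    ∀ n : ℕ, (QuotientGroup.mk ⁅c, s ^ n⁆ : G ⧸ N) = (QuotientGroup.mk ⁅c, s⁆ : G ⧸ N) ^ n := by
  intro n
  induction n with
  | zero => simp
  | succ n ih =>
    rw [pow_succ, mk_mul_right c (s ^ n) s (hall s), ih, pow_succ]

end pows

section words

lemma word_inv {S : Set G} (hS : SymmSet S) (l : List G) (hl : ∀ x ∈ l, x ∈ S) :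
    ∀ x ∈ (l.map fun y => y⁻¹).reverse, x ∈ S := by
  intro x hx
  rw [List.mem_reverse, List.mem_map] at hx
  obtain ⟨y, hy, rfl⟩ := hx
  exact (hS y).mp (hl y hy)

/-- the word for a commutator `⁅w.prod, s⁆` -/
def comWord (w : List G) (s : G) : List G :=
  w ++ [s] ++ (w.map fun y => y⁻¹).reverse ++ [s⁻¹]

lemma comWord_mem {S : Set G} (hS : SymmSet S) (w : List G) (hw : ∀ x ∈ w, x ∈ S)
    {s : G} (hs : s ∈ S) : ∀ x ∈ comWord w s, x ∈ S := by
  intro x hx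
  simp only [comWord, List.mem_append, List.mem_singleton] at hx
  rcases hx with ((h | h) | h) | h
  · exact hw x h
  · exact h ▸ hs
  · exact word_inv hS w hw x h
  · exact h ▸ (hS s).mp hs

lemma comWord_length (w : List G) (s : G) : (comWord w s).length = 2 * w.length + 2 := by
  simp [comWord]; ring

lemma comWord_prod (w : List G) (s : G) : (comWord w s).prod = ⁅w.prod, s⁆ := by
  simp only [comWord, List.prod_append, List.prod_cons, List.prod_nil,
    commutatorElement_def, mul_one]
  rw [← List.prod_inv_reverse]

/-- Lifting words through a finite central product in the quotient. -/
lemma lift_finset {α : Type*} {N : Subgroup G} [N.Normal] (S : Set G) (M : ℕ)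
    (t : Finset α) (f : α → Subgroup.center (G ⧸ N))
    (h : ∀ a ∈ t, ∃ l : List G, (∀ x ∈ l, x ∈ S) ∧ l.length ≤ M ∧
      (QuotientGroup.mk l.prod : G ⧸ N) = (f a : G ⧸ N)) :
    ∃ l : List G, (∀ x ∈ l, x ∈ S) ∧ l.length ≤ t.card * M ∧
      (QuotientGroup.mk l.prod : G ⧸ N) = ((∏ a ∈ t, f a : Subgroup.center (G ⧸ N)) : G ⧸ N) := by
  classical
  induction t using Finset.induction_on with
  | empty => exact ⟨[], by simp, by simp, by simp⟩
  | insert a s ha ih =>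
    obtain ⟨l₁, hl₁S, hl₁len, hl₁⟩ := h a (Finset.mem_insert_self a s)
    obtain ⟨l₂, hl₂S, hl₂len, hl₂⟩ := ih (fun b hb => h b (Finset.mem_insert_of_mem hb))
    refine ⟨l₁ ++ l₂, ?_, ?_, ?_⟩
    · intro x hx; rcases List.mem_append.mp hx with h | h
      · exact hl₁S x h
      · exact hl₂S x h
    · rw [List.length_append, Finset.card_insert_of_notMem ha, add_mul, one_mul]
      omega
    · rw [List.prod_append, Finset.prod_insert ha]
      push_cast
      rw [QuotientGroup.mk_mul, hl₁, hl₂]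

end words
section core

variable {N : Subgroup G} [N.Normal]

/-- word for a power of a single basic commutator -/
def powWord (t s : G) (a c : ℕ) : List G :=
  List.replicate a t ++ List.replicate a s ++ List.replicate a t⁻¹ ++ List.replicate a s⁻¹ ++
    List.replicate c t ++ [s] ++ List.replicate c t⁻¹ ++ [s⁻¹]

lemma powWord_mem {S : Set G} (hS : SymmSet S) {t s : G} (ht : t ∈ S) (hs : s ∈ S) (a c : ℕ) :
    ∀ x ∈ powWord t s a c, x ∈ S := by
  intro x hx
  simp only [powWord, List.mem_append, List.mem_replicate, List.mem_singleton] at hx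
  have ht' : t⁻¹ ∈ S := (hS t).mp ht
  have hs' : s⁻¹ ∈ S := (hS s).mp hs
  rcases hx with ((((((h | h) | h) | h) | h) | h) | h) | h
  all_goals first
    | (rw [h]; assumption)
    | (rw [h.2]; assumption)

lemma powWord_length (t s : G) (a c : ℕ) :
    (powWord t s a c).length = 4 * a + 2 * c + 2 := by
  simp [powWord]; ring

lemma powWord_prod (t s : G) (a c : ℕ) :
    (powWord t s a c).prod = ⁅t ^ a, s ^ a⁆ * ⁅t ^ c, s⁆ := by
  simp only [powWord, List.prod_append, List.prod_replicate, List.prod_cons, List.prod_nil,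
    commutatorElement_def, mul_one, inv_pow]
  group

lemma pow_word_nat {S : Set G} (hS : SymmSet S) {t s : G} (ht : t ∈ S) (hs : s ∈ S)
    (hall : ∀ b g : G, (QuotientGroup.mk ⁅b, g⁆ : G ⧸ N) ∈ Subgroup.center (G ⧸ N))
    (D n : ℕ) (hn : n ≤ D) :
    ∃ l : List G, (∀ x ∈ l, x ∈ S) ∧ l.length ≤ 8 * Nat.sqrt D + 2 ∧
      (QuotientGroup.mk l.prod : G ⧸ N) = (QuotientGroup.mk ⁅t, s⁆ : G ⧸ N) ^ n := by
  set a := Nat.sqrt n with ha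
  set c := n - a * a with hc
  refine ⟨powWord t s a c, powWord_mem hS ht hs a c, ?_, ?_⟩
  · rw [powWord_length]
    have h1 : a * a ≤ n := by
      have := Nat.sqrt_le' n; rwa [pow_two] at this
    have h2 : n < (a + 1) * (a + 1) := by
      have := Nat.lt_succ_sqrt' n
      rwa [pow_two] at this
    have h2' : n < a * a + a + a + 1 := by
      have : (a + 1) * (a + 1) = a * a + a + a + 1 := by ring
      rwa [this] at h2
    have h3 : c ≤ a + a := by
      rw [hc]
      have := Nat.sub_le_iff_le_add.mpr (show n ≤ (a + a) + a * a by linarith)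
      linarith [this]
    have h4 : a ≤ Nat.sqrt D := by rw [ha]; exact Nat.sqrt_le_sqrt hn
    linarith
  · rw [powWord_prod, QuotientGroup.mk_mul]
    have e1 : (QuotientGroup.mk ⁅t ^ a, s ^ a⁆ : G ⧸ N)
        = (QuotientGroup.mk ⁅t, s⁆ : G ⧸ N) ^ (a * a) := by
      rw [mk_pow_left t (s ^ a) (fun b => hall b (s ^ a)) a]
      rw [mk_pow_right t s (fun g => hall t g) a]
      rw [← pow_mul]
    have e2 : (QuotientGroup.mk ⁅t ^ c, s⁆ : G ⧸ N)
        = (QuotientGroup.mk ⁅t, s⁆ : G ⧸ N) ^ c := by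
      rw [mk_pow_left t s (fun b => hall b s) c]
    rw [e1, e2, ← pow_add]
    congr 1
    rw [hc]
    have h1 : a * a ≤ n := by
      have := Nat.sqrt_le' n; rwa [pow_two] at this
    omega

lemma pow_word_int {S : Set G} (hS : SymmSet S) {t s : G} (ht : t ∈ S) (hs : s ∈ S)
    (hall : ∀ b g : G, (QuotientGroup.mk ⁅b, g⁆ : G ⧸ N) ∈ Subgroup.center (G ⧸ N))
    (D : ℕ) (e : ℤ) (he1 : -(D : ℤ) ≤ e) (he2 : e ≤ D) :
    ∃ l : List G, (∀ x ∈ l, x ∈ S) ∧ l.length ≤ 8 * Nat.sqrt D + 2 ∧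
      (QuotientGroup.mk l.prod : G ⧸ N) = (QuotientGroup.mk ⁅t, s⁆ : G ⧸ N) ^ e := by
  rcases le_or_gt 0 e with he | he
  · obtain ⟨l, h1, h2, h3⟩ := pow_word_nat hS ht hs hall D e.toNat
      (by omega)
    refine ⟨l, h1, h2, ?_⟩
    rw [h3, ← zpow_natCast]
    congr 1
    omega
  · have ht' : t⁻¹ ∈ S := (hS t).mp ht
    obtain ⟨l, h1, h2, h3⟩ := pow_word_nat hS ht' hs hall D (-e).toNat (by omega)
    refine ⟨l, h1, h2, ?_⟩
    rw [h3]
    have hinv : (QuotientGroup.mk ⁅t⁻¹, s⁆ : G ⧸ N) = (QuotientGroup.mk ⁅t, s⁆ : G ⧸ N)⁻¹ :=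
      mk_inv_left t s (hall t s) (hall t⁻¹ s)
    rw [hinv, inv_pow, ← zpow_natCast, ← zpow_neg]
    congr 1
    omega

end core
section collect

variable {N : Subgroup G} [N.Normal]

/-- basic commutator as an element of the center of the quotient -/
def zfull (hall : ∀ b g : G, (QuotientGroup.mk ⁅b, g⁆ : G ⧸ N) ∈ Subgroup.center (G ⧸ N))
    (b g : G) : Subgroup.center (G ⧸ N) := ⟨QuotientGroup.mk ⁅b, g⁆, hall b g⟩

lemma zfull_inv (hall : ∀ b g : G, (QuotientGroup.mk ⁅b, g⁆ : G ⧸ N) ∈ Subgroup.center (G ⧸ N))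
    (t s : G) : zfull hall t s = (zfull hall t⁻¹ s)⁻¹ := by
  have h := mk_inv_left t⁻¹ s (hall t⁻¹ s) (hall t⁻¹⁻¹ s)
  rw [inv_inv] at h
  ext
  rw [zfull]
  push_cast
  rw [h]
  rfl

lemma collect {S : Set G}
    (hall : ∀ b g : G, (QuotientGroup.mk ⁅b, g⁆ : G ⧸ N) ∈ Subgroup.center (G ⧸ N))
    (Rf : Finset G) (hpair : ∀ x ∈ S, x ∈ Rf ∨ x⁻¹ ∈ Rf) (s : G) :
    ∀ w : List G, (∀ x ∈ w, x ∈ S) →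
      ∃ E : G → ℤ, (∀ u, -(w.length : ℤ) ≤ E u ∧ E u ≤ w.length) ∧
        (QuotientGroup.mk ⁅w.prod, s⁆ : G ⧸ N)
          = ((∏ u ∈ Rf, (zfull hall u s) ^ (E u) : Subgroup.center (G ⧸ N)) : G ⧸ N) := by
  intro w
  induction w with
  | nil =>
    intro _
    refine ⟨0, by simp, ?_⟩
    simp
  | cons t w' ih =>
    intro hw
    obtain ⟨E, hEb, hE⟩ := ih (fun x hx => hw x (List.mem_cons_of_mem t hx))
    have ht : t ∈ S := hw t (List.mem_cons_self)
    have hsplit : (QuotientGroup.mk ⁅(t :: w').prod, s⁆ : G ⧸ N)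
        = QuotientGroup.mk ⁅t, s⁆ * QuotientGroup.mk ⁅w'.prod, s⁆ := by
      rw [List.prod_cons]
      exact mk_mul_left t w'.prod s (hall w'.prod s)
    rcases hpair t ht with htR | htR
    · refine ⟨Function.update E t (E t + 1), ?_, ?_⟩
      · intro u
        rcases hEb u with ⟨h1, h2⟩
        by_cases hu : u = t
        · subst hu
          rw [Function.update_self]
          simp only [List.length_cons]
          push_cast
          omega
        · rw [Function.update_of_ne hu]
          simp only [List.length_cons]
          push_cast
          omega
      · have hmerge : (zfull hall t s) * ∏ u ∈ Rf, (zfull hall u s) ^ (E u)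
            = ∏ u ∈ Rf, (zfull hall u s) ^ (Function.update E t (E t + 1) u) := by
          rw [← Finset.mul_prod_erase Rf (fun u => (zfull hall u s) ^ (Function.update E t (E t + 1) u)) htR]
          rw [← Finset.mul_prod_erase Rf (fun u => (zfull hall u s) ^ (E u)) htR]
          have herase : ∏ u ∈ Rf.erase t, (zfull hall u s) ^ (Function.update E t (E t + 1) u)
              = ∏ u ∈ Rf.erase t, (zfull hall u s) ^ (E u) :=
            Finset.prod_congr rfl (fun u hu => by
              rw [Function.update_of_ne (Finset.ne_of_mem_erase hu)])
          rw [herase, Function.update_self, zpow_add_one]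
          rw [← mul_assoc, mul_comm (zfull hall t s)]
        rw [hsplit, hE, ← hmerge]
        push_cast
        rfl
    · refine ⟨Function.update E t⁻¹ (E t⁻¹ - 1), ?_, ?_⟩
      · intro u
        rcases hEb u with ⟨h1, h2⟩
        by_cases hu : u = t⁻¹
        · subst hu
          rw [Function.update_self]
          simp only [List.length_cons]
          push_cast
          omega
        · rw [Function.update_of_ne hu]
          simp only [List.length_cons]
          push_cast
          omega
      · have hmerge : (zfull hall t⁻¹ s)⁻¹ * ∏ u ∈ Rf, (zfull hall u s) ^ (E u)
            = ∏ u ∈ Rf, (zfull hall u s) ^ (Function.update E t⁻¹ (E t⁻¹ - 1) u) := by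
          rw [← Finset.mul_prod_erase Rf (fun u => (zfull hall u s) ^ (Function.update E t⁻¹ (E t⁻¹ - 1) u)) htR]
          rw [← Finset.mul_prod_erase Rf (fun u => (zfull hall u s) ^ (E u)) htR]
          have herase : ∏ u ∈ Rf.erase t⁻¹, (zfull hall u s) ^ (Function.update E t⁻¹ (E t⁻¹ - 1) u)
              = ∏ u ∈ Rf.erase t⁻¹, (zfull hall u s) ^ (E u) :=
            Finset.prod_congr rfl (fun u hu => by
              rw [Function.update_of_ne (Finset.ne_of_mem_erase hu)])
          rw [herase, Function.update_self, zpow_sub_one]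
          rw [← mul_assoc, mul_comm ((zfull hall t⁻¹ s)⁻¹)]
        rw [hsplit, hE, ← hmerge]
        have hco : (QuotientGroup.mk ⁅t, s⁆ : G ⧸ N)
            = (((zfull hall t⁻¹ s)⁻¹ : Subgroup.center (G ⧸ N)) : G ⧸ N) := by
          rw [← zfull_inv hall t s]
          rfl
        rw [hco]
        push_cast
        rfl

end collect

section gen

variable {N : Subgroup G} [N.Normal]

/-- basic commutator with left entry in `K`, as an element of the center of the quotient -/
def zK {K : Subgroup G}
    (hcen : ∀ c : G, c ∈ K → ∀ s : G,
      (QuotientGroup.mk ⁅c, s⁆ : G ⧸ N) ∈ Subgroup.center (G ⧸ N))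
    (k : K) (s : G) : Subgroup.center (G ⧸ N) :=
  ⟨QuotientGroup.mk ⁅(k : G), s⁆, hcen _ k.2 s⟩

lemma gen_lemma {S : Set G} (hSgen : Subgroup.closure S = ⊤) (Rf : Finset G)
    (hpair : ∀ x ∈ S, x ∈ Rf ∨ x⁻¹ ∈ Rf) (K : Subgroup G)
    (hcen : ∀ c : G, c ∈ K → ∀ s : G,
      (QuotientGroup.mk ⁅c, s⁆ : G ⧸ N) ∈ Subgroup.center (G ⧸ N)) :
    ∀ v ∈ ⁅K, (⊤ : Subgroup G)⁆, ∃ c : G → K,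
      (QuotientGroup.mk v : G ⧸ N)
        = ((∏ s ∈ Rf, zK hcen (c s) s : Subgroup.center (G ⧸ N)) : G ⧸ N) := by
  classical
  set Hsub : Subgroup (G ⧸ N) :=
    { carrier := { q | ∃ c : G → K,
        q = ((∏ s ∈ Rf, zK hcen (c s) s : Subgroup.center (G ⧸ N)) : G ⧸ N) }
      one_mem' := by
        refine ⟨fun _ => 1, ?_⟩
        have : ∀ s ∈ Rf, zK hcen (1 : K) s = 1 := by
          intro s _
          ext
          simp [zK]
        rw [Finset.prod_congr rfl this]
        simp
      mul_mem' := by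
        rintro q q' ⟨c, hc⟩ ⟨c', hc'⟩
        refine ⟨fun s => c s * c' s, ?_⟩
        have hfac : ∀ s ∈ Rf, zK hcen (c s * c' s) s = zK hcen (c s) s * zK hcen (c' s) s := by
          intro s _
          ext
          push_cast [zK]
          exact mk_mul_left _ _ s (hcen _ (c' s).2 s)
        rw [Finset.prod_congr rfl hfac, Finset.prod_mul_distrib, hc, hc']
        push_cast
        rfl
      inv_mem' := by
        rintro q ⟨c, hc⟩
        refine ⟨fun s => (c s)⁻¹, ?_⟩
        have hfac : ∀ s ∈ Rf, zK hcen (c s)⁻¹ s = (zK hcen (c s) s)⁻¹ := by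
          intro s _
          ext
          push_cast [zK]
          exact mk_inv_left _ s (hcen _ (c s).2 s) (hcen _ (K.inv_mem (c s).2) s)
        rw [Finset.prod_congr rfl hfac, Finset.prod_inv_distrib, hc]
        push_cast
        rfl } with hHsub
  have single : ∀ (k : K) (x : G), x ∈ Rf →
      (QuotientGroup.mk ⁅(k : G), x⁆ : G ⧸ N) ∈ Hsub := by
    intro k x hx
    refine ⟨fun u => if u = x then k else 1, ?_⟩
    rw [Finset.prod_eq_single_of_mem x hx]
    · simp [zK]
    · intro b _ hbx
      ext
      simp [zK, hbx]
  have main : ∀ c ∈ K, ∀ g : G, (QuotientGroup.mk ⁅c, g⁆ : G ⧸ N) ∈ Hsub := by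
    intro c hc g
    have hg : g ∈ Subgroup.closure S := by rw [hSgen]; exact Subgroup.mem_top g
    induction hg using Subgroup.closure_induction with
    | mem x hxS =>
      rcases hpair x hxS with hxR | hxR
      · exact single ⟨c, hc⟩ x hxR
      · have hrw : (QuotientGroup.mk ⁅c, x⁆ : G ⧸ N)
            = (QuotientGroup.mk ⁅c, x⁻¹⁆ : G ⧸ N)⁻¹ := by
          have := mk_inv_right c x⁻¹ (hcen c hc x⁻¹) (hcen c hc x⁻¹⁻¹)
          rw [inv_inv] at this
          exact this
        rw [hrw]
        exact Hsub.inv_mem (single ⟨c, hc⟩ x⁻¹ hxR)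
    | one =>
      have : (QuotientGroup.mk ⁅c, (1 : G)⁆ : G ⧸ N) = 1 := by simp
      rw [this]; exact Hsub.one_mem
    | mul x y hxcl hycl hx hy =>
      rw [mk_mul_right c x y (hcen c hc y)]
      exact Hsub.mul_mem hx hy
    | inv x hxcl hx =>
      rw [mk_inv_right c x (hcen c hc x) (hcen c hc x⁻¹)]
      exact Hsub.inv_mem hx
  intro v hv
  have hle : ⁅K, (⊤ : Subgroup G)⁆ ≤ Hsub.comap (QuotientGroup.mk' N) := by
    rw [Subgroup.commutator_le]
    intro g₁ hg₁ g₂ _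
    exact main g₁ hg₁ g₂
  exact hle hv

end gen
section steps

variable {N : Subgroup G} [N.Normal]

lemma step_rep {S : Set G} (hS : SymmSet S) (hSgen : Subgroup.closure S = ⊤)
    (Rf : Finset G) (hRfS : ↑Rf ⊆ S) (hpair : ∀ x ∈ S, x ∈ Rf ∨ x⁻¹ ∈ Rf)
    (K : Subgroup G)
    (hMN : ∀ u ∈ ⁅K, (⊤ : Subgroup G)⁆, ∀ g : G, ⁅u, g⁆ ∈ N)
    (Wp : ℕ)
    (hprev : ∀ c ∈ K, ∃ l : List G, (∀ x ∈ l, x ∈ S) ∧ l.length ≤ Wp ∧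
      l.prod⁻¹ * c ∈ ⁅K, (⊤ : Subgroup G)⁆) :
    ∀ v ∈ ⁅K, (⊤ : Subgroup G)⁆, ∃ l : List G, (∀ x ∈ l, x ∈ S) ∧
      l.length ≤ Rf.card * (2 * Wp + 2) ∧ l.prod⁻¹ * v ∈ N := by
  have hcen : ∀ c : G, c ∈ K → ∀ s : G,
      (QuotientGroup.mk ⁅c, s⁆ : G ⧸ N) ∈ Subgroup.center (G ⧸ N) := by
    intro c hc s
    exact mk_central (fun g => hMN _
      (Subgroup.commutator_mem_commutator hc (Subgroup.mem_top s)) g)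
  intro v hv
  obtain ⟨c, hcEq⟩ := gen_lemma hSgen Rf hpair K hcen v hv
  have hword : ∀ s ∈ Rf, ∃ l : List G, (∀ x ∈ l, x ∈ S) ∧ l.length ≤ 2 * Wp + 2 ∧
      (QuotientGroup.mk l.prod : G ⧸ N) = ((zK hcen (c s) s : Subgroup.center (G ⧸ N)) : G ⧸ N) := by
    intro s hs
    obtain ⟨w, hwS, hwlen, hwmem⟩ := hprev (c s : G) (c s).2
    have hcs : (c s : G) = w.prod * (w.prod⁻¹ * (c s : G)) := by group
    have h1 : (QuotientGroup.mk ⁅w.prod⁻¹ * (c s : G), s⁆ : G ⧸ N) = 1 :=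
      (QuotientGroup.eq_one_iff _).mpr (hMN _ hwmem s)
    have hkey : (QuotientGroup.mk ⁅(c s : G), s⁆ : G ⧸ N)
        = QuotientGroup.mk ⁅w.prod, s⁆ := by
      conv_lhs => rw [hcs]
      rw [mk_mul_left w.prod (w.prod⁻¹ * (c s : G)) s
        (by rw [h1]; exact Subgroup.one_mem _)]
      rw [h1, mul_one]
    refine ⟨comWord w s, comWord_mem hS w hwS (hRfS hs), ?_, ?_⟩
    · rw [comWord_length]; omega
    · rw [comWord_prod, ← hkey]
      rfl
  obtain ⟨l, hlS, hllen, hlprod⟩ := lift_finset S (2 * Wp + 2) Rf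
    (fun s => zK hcen (c s) s) hword
  refine ⟨l, hlS, hllen, ?_⟩
  have hfin : (QuotientGroup.mk l.prod : G ⧸ N) = QuotientGroup.mk v := by
    rw [hlprod, hcEq]
  exact (QuotientGroup.eq).mp hfin

lemma base_rep {S : Set G} (hS : SymmSet S) (hSgen : Subgroup.closure S = ⊤)
    (Rf : Finset G) (hRfS : ↑Rf ⊆ S) (hpair : ∀ x ∈ S, x ∈ Rf ∨ x⁻¹ ∈ Rf)
    (hMN : ∀ u ∈ ⁅(⊤ : Subgroup G), (⊤ : Subgroup G)⁆, ∀ g : G, ⁅u, g⁆ ∈ N)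
    (D : ℕ)
    (hprev : ∀ c : G, ∃ l : List G, (∀ x ∈ l, x ∈ S) ∧ l.length ≤ D ∧
      l.prod⁻¹ * c ∈ ⁅(⊤ : Subgroup G), (⊤ : Subgroup G)⁆) :
    ∀ v ∈ ⁅(⊤ : Subgroup G), (⊤ : Subgroup G)⁆, ∃ l : List G, (∀ x ∈ l, x ∈ S) ∧
      l.length ≤ Rf.card * (Rf.card * (8 * Nat.sqrt D + 2)) ∧ l.prod⁻¹ * v ∈ N := by
  have hall : ∀ b g : G, (QuotientGroup.mk ⁅b, g⁆ : G ⧸ N) ∈ Subgroup.center (G ⧸ N) := by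
    intro b g
    exact mk_central (fun g' => hMN _
      (Subgroup.commutator_mem_commutator (Subgroup.mem_top b) (Subgroup.mem_top g)) g')
  have hcen : ∀ c : G, c ∈ (⊤ : Subgroup G) → ∀ s : G,
      (QuotientGroup.mk ⁅c, s⁆ : G ⧸ N) ∈ Subgroup.center (G ⧸ N) :=
    fun c _ s => hall c s
  intro v hv
  obtain ⟨c, hcEq⟩ := gen_lemma hSgen Rf hpair ⊤ hcen v hv
  have hword : ∀ s ∈ Rf, ∃ l : List G, (∀ x ∈ l, x ∈ S) ∧
      l.length ≤ Rf.card * (8 * Nat.sqrt D + 2) ∧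
      (QuotientGroup.mk l.prod : G ⧸ N)
        = ((zK hcen (c s) s : Subgroup.center (G ⧸ N)) : G ⧸ N) := by
    intro s hs
    have hsS : s ∈ S := hRfS hs
    obtain ⟨w, hwS, hwlen, hwmem⟩ := hprev (c s : G)
    have hcs : (c s : G) = w.prod * (w.prod⁻¹ * (c s : G)) := by group
    have h1 : (QuotientGroup.mk ⁅w.prod⁻¹ * (c s : G), s⁆ : G ⧸ N) = 1 :=
      (QuotientGroup.eq_one_iff _).mpr (hMN _ hwmem s)
    have hkey : (QuotientGroup.mk ⁅(c s : G), s⁆ : G ⧸ N)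
        = QuotientGroup.mk ⁅w.prod, s⁆ := by
      conv_lhs => rw [hcs]
      rw [mk_mul_left w.prod (w.prod⁻¹ * (c s : G)) s
        (by rw [h1]; exact Subgroup.one_mem _)]
      rw [h1, mul_one]
    obtain ⟨E, hEb, hE⟩ := collect hall Rf hpair s w hwS
    have hpw : ∀ u ∈ Rf, ∃ l : List G, (∀ x ∈ l, x ∈ S) ∧
        l.length ≤ 8 * Nat.sqrt D + 2 ∧
        (QuotientGroup.mk l.prod : G ⧸ N)
          = (((zfull hall u s) ^ (E u) : Subgroup.center (G ⧸ N)) : G ⧸ N) := by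
      intro u hu
      rcases hEb u with ⟨hb1, hb2⟩
      have hwD : (w.length : ℤ) ≤ (D : ℤ) := by exact_mod_cast hwlen
      obtain ⟨l, hlS, hllen, hlprod⟩ := pow_word_int hS (hRfS hu) hsS hall D (E u)
        (by omega) (by omega)
      refine ⟨l, hlS, hllen, ?_⟩
      rw [hlprod]
      push_cast
      rfl
    obtain ⟨l, hlS, hllen, hlprod⟩ := lift_finset S (8 * Nat.sqrt D + 2) Rf
      (fun u => (zfull hall u s) ^ (E u)) hpw
    refine ⟨l, hlS, hllen, ?_⟩
    rw [hlprod, ← hE, ← hkey]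
    rfl
  obtain ⟨l, hlS, hllen, hlprod⟩ := lift_finset S (Rf.card * (8 * Nat.sqrt D + 2)) Rf
    (fun s => zK hcen (c s) s) hword
  refine ⟨l, hlS, hllen, ?_⟩
  have hfin : (QuotientGroup.mk l.prod : G ⧸ N) = QuotientGroup.mk v := by
    rw [hlprod, hcEq]
  exact (QuotientGroup.eq).mp hfin

end steps
section lcs

/-- The recursive length bounds. -/
def Wfun (r D : ℕ) : ℕ → ℕ
  | 0 => D
  | 1 => r * (r * (8 * Nat.sqrt D + 2))
  | (k+2) => r * (2 * Wfun r D (k+1) + 2)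

lemma lcs_rep {S : Set G} (hS : SymmSet S) (hSgen : Subgroup.closure S = ⊤)
    (Rf : Finset G) (hRfS : ↑Rf ⊆ S) (hpair : ∀ x ∈ S, x ∈ Rf ∨ x⁻¹ ∈ Rf) (D : ℕ)
    (hprev0 : ∀ c : G, ∃ l : List G, (∀ x ∈ l, x ∈ S) ∧ l.length ≤ D ∧
      l.prod⁻¹ * c ∈ (⊤ : Subgroup G).lowerCentralSeries 1) :
    ∀ k : ℕ, ∀ v ∈ (⊤ : Subgroup G).lowerCentralSeries (k + 1), ∃ l : List G, (∀ x ∈ l, x ∈ S) ∧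
      l.length ≤ Wfun Rf.card D (k + 1) ∧ l.prod⁻¹ * v ∈ (⊤ : Subgroup G).lowerCentralSeries (k + 2) := by
  intro k
  induction k with
  | zero =>
    intro v hv
    have e1 : (⊤ : Subgroup G).lowerCentralSeries 1 = ⁅(⊤ : Subgroup G), (⊤ : Subgroup G)⁆ := by
      rw [Subgroup.top_lowerCentralSeries_one]; rfl
    have hMN : ∀ u ∈ ⁅(⊤ : Subgroup G), (⊤ : Subgroup G)⁆, ∀ g : G,
        ⁅u, g⁆ ∈ (⊤ : Subgroup G).lowerCentralSeries 2 := by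
      intro u hu g
      rw [show (2 : ℕ) = 1 + 1 from rfl, Subgroup.lowerCentralSeries_succ]
      exact Subgroup.commutator_mem_commutator (by rw [e1]; exact hu) (Subgroup.mem_top g)
    have hprev0' : ∀ c : G, ∃ l : List G, (∀ x ∈ l, x ∈ S) ∧ l.length ≤ D ∧
        l.prod⁻¹ * c ∈ ⁅(⊤ : Subgroup G), (⊤ : Subgroup G)⁆ := by
      intro c
      obtain ⟨l, h1, h2, h3⟩ := hprev0 c
      exact ⟨l, h1, h2, by rw [← e1]; exact h3⟩
    obtain ⟨l, h1, h2, h3⟩ := base_rep hS hSgen Rf hRfS hpair hMN D hprev0'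
      v (by rw [← e1]; exact hv)
    exact ⟨l, h1, h2, h3⟩
  | succ k ih =>
    intro v hv
    have e1 : (⊤ : Subgroup G).lowerCentralSeries (k + 2) = ⁅(⊤ : Subgroup G).lowerCentralSeries (k + 1), (⊤ : Subgroup G)⁆ :=
      Subgroup.lowerCentralSeries_succ _ (k + 1)
    have hMN : ∀ u ∈ ⁅(⊤ : Subgroup G).lowerCentralSeries (k + 1), (⊤ : Subgroup G)⁆, ∀ g : G,
        ⁅u, g⁆ ∈ (⊤ : Subgroup G).lowerCentralSeries (k + 3) := by
      intro u hu g
      have : (⊤ : Subgroup G).lowerCentralSeries (k + 3) = ⁅(⊤ : Subgroup G).lowerCentralSeries (k + 2), (⊤ : Subgroup G)⁆ :=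
        Subgroup.lowerCentralSeries_succ _ (k + 2)
      rw [this]
      exact Subgroup.commutator_mem_commutator (by rw [e1]; exact hu) (Subgroup.mem_top g)
    have hprev : ∀ c ∈ (⊤ : Subgroup G).lowerCentralSeries (k + 1), ∃ l : List G, (∀ x ∈ l, x ∈ S) ∧
        l.length ≤ Wfun Rf.card D (k + 1) ∧
        l.prod⁻¹ * c ∈ ⁅(⊤ : Subgroup G).lowerCentralSeries (k + 1), (⊤ : Subgroup G)⁆ := by
      intro c hc
      obtain ⟨l, h1, h2, h3⟩ := ih c hc
      exact ⟨l, h1, h2, by rw [← e1]; exact h3⟩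
    obtain ⟨l, h1, h2, h3⟩ := step_rep hS hSgen Rf hRfS hpair
      ((⊤ : Subgroup G).lowerCentralSeries (k + 1)) hMN (Wfun Rf.card D (k + 1)) hprev
      v (by rw [← e1]; exact hv)
    exact ⟨l, h1, h2, h3⟩

lemma chain_rep {S : Set G} (hS : SymmSet S) (hSgen : Subgroup.closure S = ⊤)
    (Rf : Finset G) (hRfS : ↑Rf ⊆ S) (hpair : ∀ x ∈ S, x ∈ Rf ∨ x⁻¹ ∈ Rf) (D : ℕ)
    (hprev0 : ∀ c : G, ∃ l : List G, (∀ x ∈ l, x ∈ S) ∧ l.length ≤ D ∧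
      l.prod⁻¹ * c ∈ (⊤ : Subgroup G).lowerCentralSeries 1)
    (L : ℕ) (hL : (⊤ : Subgroup G).lowerCentralSeries L = ⊥) :
    ∀ v ∈ (⊤ : Subgroup G).lowerCentralSeries 1, ∃ l : List G, (∀ x ∈ l, x ∈ S) ∧
      l.length ≤ ∑ i ∈ Finset.Ico 1 L, Wfun Rf.card D i ∧ l.prod = v := by
  suffices h : ∀ m k : ℕ, k + m = L → 1 ≤ k →
      ∀ v ∈ (⊤ : Subgroup G).lowerCentralSeries k, ∃ l : List G, (∀ x ∈ l, x ∈ S) ∧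
        l.length ≤ ∑ i ∈ Finset.Ico k L, Wfun Rf.card D i ∧ l.prod = v by
    intro v hv
    rcases le_or_gt L 0 with hL0 | hL0
    · -- L = 0 : lcs 0 = ⊥ means G trivial
      interval_cases L
      have hbot : (⊤ : Subgroup G).lowerCentralSeries 1 = ⊥ := by
        rw [eq_bot_iff, ← hL]
        exact Subgroup.lowerCentralSeries_antitone _ (by omega)
      rw [hbot] at hv
      refine ⟨[], by simp, by simp, ?_⟩
      simp [Subgroup.mem_bot.mp hv]
    · exact h (L - 1) 1 (by omega) le_rfl v hv
  intro m
  induction m with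
  | zero =>
    intro k hk _ v hv
    subst hk
    simp only [add_zero] at *
    rw [hL] at hv
    refine ⟨[], by simp, by simp, ?_⟩
    simp [Subgroup.mem_bot.mp hv]
  | succ m ih =>
    intro k hk hk1 v hv
    obtain ⟨j, rfl⟩ : ∃ j, k = j + 1 := ⟨k - 1, by omega⟩
    obtain ⟨l₁, h1S, h1len, h1mem⟩ := lcs_rep hS hSgen Rf hRfS hpair D hprev0 j v hv
    obtain ⟨l₂, h2S, h2len, h2prod⟩ := ih (j + 2) (by omega) (by omega) _ h1mem
    refine ⟨l₁ ++ l₂, ?_, ?_, ?_⟩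
    · intro x hx; rcases List.mem_append.mp hx with h | h
      · exact h1S x h
      · exact h2S x h
    · rw [List.length_append]
      have hlt : j + 1 < L := by omega
      rw [Finset.sum_eq_sum_Ico_succ_bot hlt]
      have h2len' : l₂.length ≤ ∑ i ∈ Finset.Ico (j + 1 + 1) L, Wfun Rf.card D i := by
        have he : j + 2 = j + 1 + 1 := by omega
        rw [← he]
        exact h2len
      omega
    · rw [List.prod_append, h2prod]
      group
end lcs
section numeric

lemma Wfun_ge_two (r D : ℕ) (hr : 1 ≤ r) : ∀ k, 1 ≤ k → 2 ≤ Wfun r D k := by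
  intro k hk
  match k, hk with
  | 1, _ =>
    show 2 ≤ r * (r * (8 * Nat.sqrt D + 2))
    calc 2 = 1 * (1 * 2) := by ring
    _ ≤ r * (r * (8 * Nat.sqrt D + 2)) := by
        apply Nat.mul_le_mul hr
        apply Nat.mul_le_mul hr
        omega
  | (k+2), _ =>
    show 2 ≤ r * (2 * Wfun r D (k+1) + 2)
    calc 2 = 1 * 2 := by ring
    _ ≤ r * (2 * Wfun r D (k+1) + 2) := Nat.mul_le_mul hr (by omega)

lemma Wfun_le (r D : ℕ) (hr : 1 ≤ r) :
    ∀ k, 1 ≤ k → Wfun r D k ≤ 3 ^ (k - 1) * r ^ (k + 1) * (8 * Nat.sqrt D + 2) := by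
  intro k
  induction k with
  | zero => omega
  | succ k ih =>
    intro _
    rcases Nat.eq_zero_or_pos k with hk0 | hk1
    · subst hk0
      show r * (r * (8 * Nat.sqrt D + 2)) ≤ 3 ^ 0 * r ^ 2 * (8 * Nat.sqrt D + 2)
      ring_nf
      nlinarith [Nat.sqrt_le' D]
    · have hW2 := Wfun_ge_two r D hr k hk1
      have hWle := ih hk1
      obtain ⟨j, rfl⟩ : ∃ j, k = j + 1 := ⟨k - 1, by omega⟩
      show r * (2 * Wfun r D (j + 1) + 2) ≤ _
      have h1 : 2 * Wfun r D (j + 1) + 2 ≤ 3 * Wfun r D (j + 1) := by omega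
      calc r * (2 * Wfun r D (j + 1) + 2) ≤ r * (3 * Wfun r D (j + 1)) :=
            Nat.mul_le_mul_left r h1
        _ ≤ r * (3 * (3 ^ (j + 1 - 1) * r ^ (j + 1 + 1) * (8 * Nat.sqrt D + 2))) :=
            Nat.mul_le_mul_left r (Nat.mul_le_mul_left 3 hWle)
        _ = 3 ^ (j + 1) * r ^ (j + 3) * (8 * Nat.sqrt D + 2) := by
            simp only [Nat.add_sub_cancel]
            ring
        _ = 3 ^ (j + 1 + 1 - 1) * r ^ (j + 1 + 1 + 1) * (8 * Nat.sqrt D + 2) := by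
            simp only [Nat.add_sub_cancel]

lemma sum_Wfun_le (r D L : ℕ) (hr : 1 ≤ r) (hD : 1 ≤ D) (hL : 2 ≤ L) :
    ∑ i ∈ Finset.Ico 1 L, Wfun r D i ≤ 10 * L * 3 ^ L * r ^ L * Nat.sqrt D := by
  have hsq : 1 ≤ Nat.sqrt D := by
    have : Nat.sqrt 1 ≤ Nat.sqrt D := Nat.sqrt_le_sqrt hD
    simpa using this
  have hterm : ∀ i ∈ Finset.Ico 1 L, Wfun r D i ≤ 3 ^ L * r ^ L * (10 * Nat.sqrt D) := by
    intro i hi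
    rw [Finset.mem_Ico] at hi
    calc Wfun r D i ≤ 3 ^ (i - 1) * r ^ (i + 1) * (8 * Nat.sqrt D + 2) :=
          Wfun_le r D hr i hi.1
      _ ≤ 3 ^ L * r ^ L * (10 * Nat.sqrt D) := by
          apply Nat.mul_le_mul
          apply Nat.mul_le_mul
          · exact Nat.pow_le_pow_right (by norm_num) (by omega)
          · exact Nat.pow_le_pow_right hr (by omega)
          · omega
  calc ∑ i ∈ Finset.Ico 1 L, Wfun r D i
      ≤ ∑ _i ∈ Finset.Ico 1 L, 3 ^ L * r ^ L * (10 * Nat.sqrt D) :=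
        Finset.sum_le_sum hterm
    _ = (L - 1) * (3 ^ L * r ^ L * (10 * Nat.sqrt D)) := by
        rw [Finset.sum_const, Nat.card_Ico, smul_eq_mul]
    _ ≤ L * (3 ^ L * r ^ L * (10 * Nat.sqrt D)) :=
        Nat.mul_le_mul_right _ (by omega)
    _ = 10 * L * 3 ^ L * r ^ L * Nat.sqrt D := by ring

end numeric
lemma le_rpow_inv {x y : ℝ} (hx : 0 ≤ x) (n : ℕ) (hn : 0 < n) (h : x ^ n ≤ y) :
    x ≤ y ^ ((1 : ℝ) / n) := by
  have h1 : x = (x ^ n) ^ ((1 : ℝ) / n) := by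
    rw [← Real.rpow_natCast x n, ← Real.rpow_mul hx]
    rw [mul_one_div]
    rw [div_self (by positivity : (n : ℝ) ≠ 0), Real.rpow_one]
  rw [h1]
  exact Real.rpow_le_rpow (by positivity) h (by positivity)

end DiamAux

/-- Corollary `diam_comparison`: for each `L ≥ 2` there is a constant `C > 0`
such that whenever `Diam_S(G_ab) ≥ C |R|^{4L}`, one has `Diam_S(G₂) ≤ C · Diam_S(G_ab)^{3/4}`. -/
theorem diam_commutator_le_diam_ab_pow (L : ℕ) (hL2 : 2 ≤ L) :
    ∃ C : ℝ, 0 < C ∧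
      ∀ (G : Type) [Group G] [Fintype G],
        NilpotencyClassEq G L →
        ∀ S R : Set G, SymmSet S → Subgroup.closure S = ⊤ → R ⊆ S →
          (∀ s ∈ S, (({s, s⁻¹} : Set G) ∩ R).ncard = 1) →
          C * (R.ncard : ℝ) ^ (4 * L) ≤
            (quotDiam S (Set.univ : Set G) (commutator G : Set G) : ℝ) →
          (setDiam S (commutator G : Set G) : ℝ) ≤
            C * (quotDiam S (Set.univ : Set G) (commutator G : Set G) : ℝ) ^ ((3 : ℝ) / 4) := by
  classical
  set cL : ℕ := 10 * L * 3 ^ L with hcL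
  have hcL1 : 1 ≤ cL := by
    have h3 : 1 ≤ 3 ^ L := Nat.one_le_pow L 3 (by norm_num)
    have h10 : 20 ≤ 10 * L := by omega
    calc 1 ≤ (10 * L) * 3 ^ L := by nlinarith
      _ = cL := rfl
  have hC1 : (1 : ℝ) ≤ (cL : ℝ) := by exact_mod_cast hcL1
  have hCpos : (0 : ℝ) < (cL : ℝ) := by linarith
  refine ⟨(cL : ℝ), hCpos, ?_⟩
  intro G _ _ hnil S R hS hSgen hRS hone hquot
  -- notation
  set D : ℕ := quotDiam S (Set.univ : Set G) (commutator G : Set G) with hDdef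
  have hfinR : R.Finite := Set.toFinite R
  set Rf : Finset G := hfinR.toFinset with hRfdef
  have hRfmem : ∀ x : G, x ∈ Rf ↔ x ∈ R := fun x => Set.Finite.mem_toFinset hfinR
  have hRfS : ↑Rf ⊆ S := by
    intro x hx
    exact hRS ((hRfmem x).mp hx)
  have hpair : ∀ x ∈ S, x ∈ Rf ∨ x⁻¹ ∈ Rf := by
    intro s hs
    have hne : (({s, s⁻¹} : Set G) ∩ R).Nonempty := by
      apply Set.nonempty_of_ncard_ne_zero
      rw [hone s hs]
      exact one_ne_zero
    obtain ⟨x, hx1, hx2⟩ := hne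
    rcases hx1 with h | h
    · left; rw [hRfmem]; rw [← h]; exact hx2
    · right; rw [hRfmem]; rw [← h]; exact hx2
  have hcard : Rf.card = R.ncard := (Set.ncard_eq_toFinset_card R hfinR).symm
  -- nontriviality
  have hnontriv : Nontrivial G := by
    by_contra hcon
    rw [not_nontrivial_iff_subsingleton] at hcon
    apply hnil.2
    ext x
    simp only [Subgroup.mem_bot]
    constructor
    · intro _; exact Subsingleton.elim x 1
    · intro hx; rw [hx]; exact Subgroup.one_mem _
  -- r ≥ 1
  have hSne : S.Nonempty := by
    rcases Set.eq_empty_or_nonempty S with h | h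
    · exfalso
      rw [h, Subgroup.closure_empty] at hSgen
      obtain ⟨a, b, hab⟩ := hnontriv
      apply hab
      have ha : a ∈ (⊥ : Subgroup G) := by rw [hSgen]; trivial
      have hb : b ∈ (⊥ : Subgroup G) := by rw [hSgen]; trivial
      rw [Subgroup.mem_bot] at ha hb
      rw [ha, hb]
    · exact h
  have hr1 : 1 ≤ Rf.card := by
    obtain ⟨s, hs⟩ := hSne
    rcases hpair s hs with h | h
    · exact Finset.card_pos.mpr ⟨s, h⟩
    · exact Finset.card_pos.mpr ⟨s⁻¹, h⟩
  have hrR1 : (1 : ℝ) ≤ (Rf.card : ℝ) := by exact_mod_cast hr1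
  -- D ≥ 1
  have hquot' : (cL : ℝ) * (Rf.card : ℝ) ^ (4 * L) ≤ (D : ℝ) := by
    rw [hcard]
    push_cast
    push_cast at hquot
    exact hquot
  have hDR1 : (1 : ℝ) ≤ (D : ℝ) := by
    have h1 : (1 : ℝ) ≤ (Rf.card : ℝ) ^ (4 * L) := one_le_pow₀ hrR1
    nlinarith
  have hD1 : 1 ≤ D := by exact_mod_cast hDR1
  -- words exist for every element
  have hwords : ∀ h : G, ∃ l : List G, (∀ x ∈ l, x ∈ S) ∧ l.prod = h := by
    intro h
    have hmem : h ∈ Subgroup.closure S := by rw [hSgen]; exact Subgroup.mem_top h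
    induction hmem using Subgroup.closure_induction with
    | mem x hx => exact ⟨[x], by simp [hx], by simp⟩
    | one => exact ⟨[], by simp, by simp⟩
    | mul x y _ _ hx hy =>
      obtain ⟨lx, hlxS, hlxp⟩ := hx
      obtain ⟨ly, hlyS, hlyp⟩ := hy
      refine ⟨lx ++ ly, ?_, by rw [List.prod_append, hlxp, hlyp]⟩
      intro z hz
      rcases List.mem_append.mp hz with h' | h'
      · exact hlxS z h'
      · exact hlyS z h'
    | inv x _ hx =>
      obtain ⟨l, hlS, hlp⟩ := hx
      exact ⟨(l.map fun y => y⁻¹).reverse, DiamAux.word_inv hS l hlS,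
        by rw [← List.prod_inv_reverse, hlp]⟩
  -- the defining set of quotDiam is nonempty, so D itself satisfies the property
  have hDmem : ∀ h : G, ∃ l : List G, (∀ x ∈ l, x ∈ S) ∧ l.length ≤ D ∧
      ∃ u ∈ (commutator G : Set G), h = l.prod * u := by
    set P : ℕ → Prop := fun n => ∀ h ∈ (Set.univ : Set G), ∃ l : List G,
      (∀ x ∈ l, x ∈ S) ∧ l.length ≤ n ∧ ∃ u ∈ (commutator G : Set G), h = l.prod * u
      with hP
    have hne : {n : ℕ | P n}.Nonempty := by
      set f : G → List G := fun h => Classical.choose (hwords h) with hf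
      refine ⟨Finset.univ.sup (fun h => (f h).length), ?_⟩
      intro h _
      obtain ⟨hfS, hfp⟩ := Classical.choose_spec (hwords h)
      refine ⟨f h, hfS,
        Finset.le_sup (f := fun h => (f h).length) (Finset.mem_univ h), 1, ?_,
        by rw [hfp, mul_one]⟩
      exact SetLike.mem_coe.mpr (Subgroup.one_mem _)
    have hmem := Nat.sInf_mem hne
    intro h
    exact hmem h (Set.mem_univ h)
  have hprev0 : ∀ c : G, ∃ l : List G, (∀ x ∈ l, x ∈ S) ∧ l.length ≤ D ∧
      l.prod⁻¹ * c ∈ (⊤ : Subgroup G).lowerCentralSeries 1 := by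
    intro c
    obtain ⟨l, h1, h2, u, hu, hcu⟩ := hDmem c
    refine ⟨l, h1, h2, ?_⟩
    rw [Subgroup.top_lowerCentralSeries_one]
    have : l.prod⁻¹ * c = u := by rw [hcu]; group
    rw [this]
    exact SetLike.mem_coe.mp hu
  -- chain through the lower central series
  have hchain := DiamAux.chain_rep hS hSgen Rf hRfS hpair D hprev0 L hnil.1
  set Btot : ℕ := ∑ i ∈ Finset.Ico 1 L, DiamAux.Wfun Rf.card D i with hBtot
  have hsetdiam : setDiam S (commutator G : Set G) ≤ Btot := by
    apply csSup_le
    · exact ⟨wordLength S 1, ⟨1, SetLike.mem_coe.mpr (Subgroup.one_mem _), rfl⟩⟩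
    · rintro b ⟨v, hv, rfl⟩
      have hv' : v ∈ (⊤ : Subgroup G).lowerCentralSeries 1 := by
        rw [Subgroup.top_lowerCentralSeries_one]
        exact SetLike.mem_coe.mp hv
      obtain ⟨l, h1, h2, h3⟩ := hchain v hv'
      have hle : wordLength S v ≤ l.length := Nat.sInf_le ⟨l, h1, rfl, h3⟩
      omega
  have hBle : Btot ≤ cL * Rf.card ^ L * Nat.sqrt D := by
    have := DiamAux.sum_Wfun_le Rf.card D L hr1 hD1 hL2
    calc Btot ≤ 10 * L * 3 ^ L * Rf.card ^ L * Nat.sqrt D := this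
      _ = cL * Rf.card ^ L * Nat.sqrt D := by rw [hcL]
  -- real arithmetic
  have hx4 : ((Rf.card : ℝ) ^ L) ^ (4 : ℕ) ≤ (D : ℝ) / (cL : ℝ) := by
    rw [le_div_iff₀ hCpos]
    calc ((Rf.card : ℝ) ^ L) ^ (4 : ℕ) * (cL : ℝ)
        = (cL : ℝ) * (Rf.card : ℝ) ^ (4 * L) := by
          rw [← pow_mul]
          ring_nf
      _ ≤ (D : ℝ) := hquot'
  have hxle : (Rf.card : ℝ) ^ L ≤ ((D : ℝ) / (cL : ℝ)) ^ ((1 : ℝ) / 4) :=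
    DiamAux.le_rpow_inv (by positivity) 4 (by norm_num) hx4
  have hsq2 : ((Nat.sqrt D : ℕ) : ℝ) ^ (2 : ℕ) ≤ (D : ℝ) := by
    have := Nat.sqrt_le' D
    exact_mod_cast this
  have hsqle : ((Nat.sqrt D : ℕ) : ℝ) ≤ (D : ℝ) ^ ((1 : ℝ) / 2) :=
    DiamAux.le_rpow_inv (by positivity) 2 (by norm_num) hsq2
  have hDpos : (0 : ℝ) < (D : ℝ) := by linarith
  -- final chain
  have hmain : (setDiam S (commutator G : Set G) : ℝ)
      ≤ (cL : ℝ) * ((D : ℝ) / (cL : ℝ)) ^ ((1 : ℝ) / 4) * (D : ℝ) ^ ((1 : ℝ) / 2) := by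
    have h1 : (setDiam S (commutator G : Set G) : ℝ) ≤ (Btot : ℝ) := by exact_mod_cast hsetdiam
    have h2 : (Btot : ℝ) ≤ (cL : ℝ) * (Rf.card : ℝ) ^ L * ((Nat.sqrt D : ℕ) : ℝ) := by
      exact_mod_cast hBle
    have h3 : (cL : ℝ) * (Rf.card : ℝ) ^ L * ((Nat.sqrt D : ℕ) : ℝ)
        ≤ (cL : ℝ) * ((D : ℝ) / (cL : ℝ)) ^ ((1 : ℝ) / 4) * (D : ℝ) ^ ((1 : ℝ) / 2) := by
      apply mul_le_mul
      · exact mul_le_mul_of_nonneg_left hxle (le_of_lt hCpos)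
      · exact hsqle
      · positivity
      · positivity
    linarith
  have halg : (cL : ℝ) * ((D : ℝ) / (cL : ℝ)) ^ ((1 : ℝ) / 4) * (D : ℝ) ^ ((1 : ℝ) / 2)
      ≤ (cL : ℝ) * (D : ℝ) ^ ((3 : ℝ) / 4) := by
    rw [Real.div_rpow (le_of_lt hDpos) (le_of_lt hCpos)]
    have hDsplit : (D : ℝ) ^ ((1 : ℝ) / 4) * (D : ℝ) ^ ((1 : ℝ) / 2)
        = (D : ℝ) ^ ((3 : ℝ) / 4) := by
      rw [← Real.rpow_add hDpos]
      norm_num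
    have hCfrac : (cL : ℝ) / (cL : ℝ) ^ ((1 : ℝ) / 4) = (cL : ℝ) ^ ((3 : ℝ) / 4) := by
      rw [show (3 : ℝ) / 4 = 1 - 1 / 4 by norm_num, Real.rpow_sub hCpos, Real.rpow_one]
    have hCle : (cL : ℝ) ^ ((3 : ℝ) / 4) ≤ (cL : ℝ) := by
      calc (cL : ℝ) ^ ((3 : ℝ) / 4) ≤ (cL : ℝ) ^ (1 : ℝ) :=
            Real.rpow_le_rpow_of_exponent_le hC1 (by norm_num)
        _ = (cL : ℝ) := Real.rpow_one _
    calc (cL : ℝ) * ((D : ℝ) ^ ((1 : ℝ) / 4) / (cL : ℝ) ^ ((1 : ℝ) / 4)) * (D : ℝ) ^ ((1 : ℝ) / 2)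
        = ((cL : ℝ) / (cL : ℝ) ^ ((1 : ℝ) / 4))
            * ((D : ℝ) ^ ((1 : ℝ) / 4) * (D : ℝ) ^ ((1 : ℝ) / 2)) := by ring
      _ = (cL : ℝ) ^ ((3 : ℝ) / 4) * (D : ℝ) ^ ((3 : ℝ) / 4) := by rw [hCfrac, hDsplit]
      _ ≤ (cL : ℝ) * (D : ℝ) ^ ((3 : ℝ) / 4) := by
          apply mul_le_mul_of_nonneg_right hCle
          positivity
  linarith
end
end

section
/- Let G be a group and S ⊆ G a symmetric set. For every integer i ≥ 2, every integer j with 2 ≤ j ≤ i, every n ∈ ℕ, and all x₁, …, x_i ∈ S, the element ρ(x₁^n, x₂^n, …, x_j^n, x_{j+1}, …, x_i) is the product of some list of at most 2^{i+2}·n elements of S. -/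
open scoped BigOperators
open scoped Classical

noncomputable section

lemma rho_one {G : Type*} [Group G] (l : List G) : rho (1 : G) l = 1 := by
  induction l with
  | nil => rfl
  | cons y ys ih =>
    have : pcomm (1 : G) y = 1 := by simp [pcomm]
    simpa [rho, List.foldl_cons, this] using ih

lemma rho_aux {G : Type*} [Group G] (S : Set G) (hS : SymmSet S) :
    ∀ (ys : List G) (g : G) (a m : ℕ),
      (∃ lg : List G, (∀ x ∈ lg, x ∈ S) ∧ lg.length ≤ a ∧ lg.prod = g) →
      (∀ y ∈ ys, ∃ ly : List G, (∀ x ∈ ly, x ∈ S) ∧ ly.length ≤ m ∧ ly.prod = y) →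
      ∃ l : List G, (∀ x ∈ l, x ∈ S) ∧ l.length ≤ 2 ^ ys.length * (a + 2 * m) ∧
        l.prod = rho g ys := by
  intro ys
  induction ys with
  | nil =>
    intro g a m ⟨lg, h1, h2, h3⟩ _
    exact ⟨lg, h1, by simpa using le_trans h2 (by omega), h3⟩
  | cons y ys ih =>
    intro g a m ⟨lg, hg1, hg2, hg3⟩ hys
    obtain ⟨ly, hy1, hy2, hy3⟩ := hys y List.mem_cons_self
    have hstep : ∃ l' : List G, (∀ x ∈ l', x ∈ S) ∧ l'.length ≤ 2 * a + 2 * m ∧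
        l'.prod = pcomm g y := by
      refine ⟨(lg.map Inv.inv).reverse ++ (ly.map Inv.inv).reverse ++ lg ++ ly, ?_, ?_, ?_⟩
      · intro x hx
        simp only [List.mem_append, List.mem_reverse, List.mem_map] at hx
        rcases hx with ((⟨z, hz, rfl⟩ | ⟨z, hz, rfl⟩) | hx) | hx
        · exact (hS z).mp (hg1 z hz)
        · exact (hS z).mp (hy1 z hz)
        · exact hg1 x hx
        · exact hy1 x hx
      · simp only [List.length_append, List.length_reverse, List.length_map]
        omega
      · simp only [List.prod_append, ← List.prod_inv_reverse, hg3, hy3, pcomm, mul_assoc]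
    obtain ⟨l', h1, h2, h3⟩ := hstep
    have hrest : ∀ z ∈ ys, ∃ lz : List G, (∀ x ∈ lz, x ∈ S) ∧ lz.length ≤ m ∧ lz.prod = z :=
      fun z hz => hys z (List.mem_cons_of_mem _ hz)
    obtain ⟨l, hl1, hl2, hl3⟩ := ih (pcomm g y) (2 * a + 2 * m) m ⟨l', h1, h2, h3⟩ hrest
    refine ⟨l, hl1, ?_, ?_⟩
    · calc l.length ≤ 2 ^ ys.length * (2 * a + 2 * m + 2 * m) := hl2
        _ ≤ 2 ^ (y :: ys).length * (a + 2 * m) := by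
            simp only [List.length_cons, pow_succ]
            nlinarith [pow_pos (by norm_num : (0:ℕ) < 2) ys.length]
    · simpa [rho, List.foldl_cons] using hl3

/-- inequality `e:bilinearity3`: `ρ(x₁^n, …, x_j^n, x_{j+1}, …, x_i)` is a
product of at most `2^{i+2} n` elements of `S`. -/
theorem rho_powers_word_length (G : Type*) [Group G] (S : Set G) (hS : SymmSet S)
    (i j n : ℕ) (hi : 2 ≤ i) (hj2 : 2 ≤ j) (hji : j ≤ i)
    (x : ℕ → G) (hx : ∀ k < i, x k ∈ S) :
    ∃ l : List G, (∀ y ∈ l, y ∈ S) ∧ l.length ≤ 2 ^ (i + 2) * n ∧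
      l.prod = rho ((x 0) ^ n)
        (List.ofFn (fun k : Fin (i - 1) =>
          if (k : ℕ) + 1 < j then (x ((k : ℕ) + 1)) ^ n else x ((k : ℕ) + 1))) := by
  rcases Nat.eq_zero_or_pos n with rfl | hn
  · refine ⟨[], by simp, by simp, ?_⟩
    simp [pow_zero, rho_one]
  · have key := rho_aux S hS
      (List.ofFn (fun k : Fin (i - 1) =>
        if (k : ℕ) + 1 < j then (x ((k : ℕ) + 1)) ^ n else x ((k : ℕ) + 1)))
      ((x 0) ^ n) n n
      ⟨List.replicate n (x 0), by
        intro y hy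
        rw [List.eq_of_mem_replicate hy]
        exact hx 0 (by omega), by simp, by simp⟩
      (by
        intro y hy
        rw [List.mem_ofFn] at hy
        obtain ⟨k, hk⟩ := hy
        have hki : (k : ℕ) + 1 < i := by
          have := k.isLt; omega
        by_cases h : (k : ℕ) + 1 < j
        · refine ⟨List.replicate n (x ((k : ℕ) + 1)), ?_, by simp, ?_⟩
          · intro z hz
            rw [List.eq_of_mem_replicate hz]
            exact hx _ hki
          · rw [List.prod_replicate, ← hk]; simp [h]
        · refine ⟨[x ((k : ℕ) + 1)], ?_, by simp; omega, ?_⟩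
          · intro z hz
            rw [List.mem_singleton] at hz
            rw [hz]; exact hx _ hki
          · rw [List.prod_singleton, ← hk]; simp [h])
    obtain ⟨l, h1, h2, h3⟩ := key
    refine ⟨l, h1, ?_, h3⟩
    calc l.length ≤ 2 ^ (List.ofFn (fun k : Fin (i - 1) =>
          if (k : ℕ) + 1 < j then (x ((k : ℕ) + 1)) ^ n else x ((k : ℕ) + 1))).length
            * (n + 2 * n) := h2
      _ = 2 ^ (i - 1) * (3 * n) := by rw [List.length_ofFn]; ring_nf
      _ ≤ 2 ^ (i + 2) * n := by
          have : 2 ^ (i - 1) * 3 ≤ 2 ^ (i + 2) := by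
            have : 2 ^ (i - 1) * 3 ≤ 2 ^ (i - 1) * 8 := by omega
            calc 2 ^ (i - 1) * 3 ≤ 2 ^ (i - 1) * 2 ^ 3 := by omega
              _ = 2 ^ (i - 1 + 3) := (pow_add 2 (i - 1) 3).symm
              _ ≤ 2 ^ (i + 2) := Nat.pow_le_pow_right (by norm_num) (by omega)
          calc 2 ^ (i - 1) * (3 * n) = 2 ^ (i - 1) * 3 * n := by ring
            _ ≤ 2 ^ (i + 2) * n := Nat.mul_le_mul_right n this

end
end

section
/- Let G be a finite nilpotent group generated by a symmetric set S ⊆ G, let R ⊆ S contain exactly one element of {s, s⁻¹} for each s ∈ S, and set D := Diam_S(G_ab). Then for every i ≥ 1 and every g ∈ G_i there exist functions ℓ_τ : S → ℕ, indexed by tuples τ = (x₂, …, x_i) ∈ R^{i−1}, such that for every τ one has ∑_{s ∈ S} ℓ_τ(s) ≤ D and ℓ_τ(s)·ℓ_τ(s⁻¹) = 0 whenever s ≠ s⁻¹, and such that in the abelian group G_i/G_{i+1} the coset g·G_{i+1} equals the product over all τ = (x₂,…,x_i) ∈ R^{i−1} and all s ∈ S of the cosets ρ(s^{ℓ_τ(s)},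 x₂, …, x_i)·G_{i+1} (for i = 1 the tuple τ is empty and ρ(s^{ℓ(s)}) := s^{ℓ(s)}). -/
open scoped BigOperators
open scoped Classical

noncomputable section

section Helpers
variable {G : Type*} [Group G]

lemma pcomm_one_left (x : G) : pcomm 1 x = 1 := by simp [pcomm]
lemma pcomm_one_right (a : G) : pcomm a 1 = 1 := by simp [pcomm]

lemma pcomm_mem_lcs {k : ℕ} {a : G} (ha : a ∈ (⊤ : Subgroup G).lowerCentralSeries k) (x : G) :
    pcomm a x ∈ (⊤ : Subgroup G).lowerCentralSeries (k + 1) := by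
  rw [Subgroup.mem_lowerCentralSeries_succ_iff]
  apply Subgroup.subset_closure
  exact ⟨a⁻¹, inv_mem ha, x⁻¹, trivial, by simp [pcomm, commutatorElement_def]⟩

lemma rho_nil (a : G) : rho a [] = a := rfl

lemma rho_append_singleton (a : G) (l : List G) (y : G) :
    rho a (l ++ [y]) = pcomm (rho a l) y := by
  simp [rho, List.foldl_append]

lemma rho_cons (a : G) (y : G) (t : List G) : rho a (y :: t) = rho (pcomm a y) t := rfl

lemma rho_mem_lcs {k : ℕ} {a : G} (ha : a ∈ (⊤ : Subgroup G).lowerCentralSeries k) (l : List G) :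
    rho a l ∈ (⊤ : Subgroup G).lowerCentralSeries (k + l.length) := by
  induction l generalizing a k with
  | nil => simpa [rho] using ha
  | cons y t ih =>
      have h2 := ih (pcomm_mem_lcs ha y)
      rw [rho_cons]
      have : k + 1 + t.length = k + (y :: t).length := by simp; omega
      rwa [this] at h2

lemma mk_mem_center {k : ℕ} {a : G} (ha : a ∈ (⊤ : Subgroup G).lowerCentralSeries k) :
    (QuotientGroup.mk a : G ⧸ (⊤ : Subgroup G).lowerCentralSeries (k + 1)) ∈
      Subgroup.center (G ⧸ (⊤ : Subgroup G).lowerCentralSeries (k + 1)) := by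
  rw [Subgroup.mem_center_iff]
  intro q
  induction q using QuotientGroup.induction_on with
  | _ x =>
    show ((x * a : G) : G ⧸ (⊤ : Subgroup G).lowerCentralSeries (k+1)) = ((a * x : G) : _)
    rw [QuotientGroup.eq]
    have h : (x * a)⁻¹ * (a * x) = pcomm a x := by simp [pcomm]; group
    rw [h]
    exact pcomm_mem_lcs ha x

lemma conj_cancel {Q : Type*} [Group Q] {A : Q} (hA : A ∈ Subgroup.center Q) (b : Q) :
    b⁻¹ * A * b = A := by
  rw [Subgroup.mem_center_iff] at hA
  rw [mul_assoc, ← hA b]; group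

section Bilin
variable {G : Type*} [Group G]

lemma pcomm_mul_left_mod {k : ℕ} {a b : G} (ha : a ∈ (⊤ : Subgroup G).lowerCentralSeries k)
    (hb : b ∈ (⊤ : Subgroup G).lowerCentralSeries k) (x : G) :
    (QuotientGroup.mk (pcomm (a * b) x) : G ⧸ (⊤ : Subgroup G).lowerCentralSeries (k + 2)) =
      QuotientGroup.mk (pcomm a x) * QuotientGroup.mk (pcomm b x) := by
  have hid : pcomm (a * b) x = b⁻¹ * pcomm a x * b * pcomm b x := by
    simp only [pcomm]; group
  have hcen : (QuotientGroup.mk (pcomm a x) : G ⧸ (⊤ : Subgroup G).lowerCentralSeries (k + 2)) ∈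
      Subgroup.center (G ⧸ (⊤ : Subgroup G).lowerCentralSeries (k + 2)) :=
    mk_mem_center (pcomm_mem_lcs ha x)
  rw [hid]
  calc (QuotientGroup.mk (b⁻¹ * pcomm a x * b * pcomm b x) :
          G ⧸ (⊤ : Subgroup G).lowerCentralSeries (k + 2))
      = (QuotientGroup.mk b)⁻¹ * QuotientGroup.mk (pcomm a x) * QuotientGroup.mk b *
          QuotientGroup.mk (pcomm b x) := by
        simp [QuotientGroup.mk_mul, QuotientGroup.mk_inv, -Subgroup.lowerCentralSeries_succ]
    _ = QuotientGroup.mk (pcomm a x) * QuotientGroup.mk (pcomm b x) := by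
        rw [conj_cancel hcen]

lemma pcomm_mul_right_mod {k : ℕ} {a : G} (ha : a ∈ (⊤ : Subgroup G).lowerCentralSeries k) (x y : G) :
    (QuotientGroup.mk (pcomm a (x * y)) : G ⧸ (⊤ : Subgroup G).lowerCentralSeries (k + 2)) =
      QuotientGroup.mk (pcomm a x) * QuotientGroup.mk (pcomm a y) := by
  have hid : pcomm a (x * y) = pcomm a y * (y⁻¹ * pcomm a x * y) := by
    simp only [pcomm]; group
  have hcen : (QuotientGroup.mk (pcomm a x) : G ⧸ (⊤ : Subgroup G).lowerCentralSeries (k + 2)) ∈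
      Subgroup.center (G ⧸ (⊤ : Subgroup G).lowerCentralSeries (k + 2)) :=
    mk_mem_center (pcomm_mem_lcs ha x)
  rw [hid]
  calc (QuotientGroup.mk (pcomm a y * (y⁻¹ * pcomm a x * y)) :
          G ⧸ (⊤ : Subgroup G).lowerCentralSeries (k + 2))
      = QuotientGroup.mk (pcomm a y) *
          ((QuotientGroup.mk y)⁻¹ * QuotientGroup.mk (pcomm a x) * QuotientGroup.mk y) := by
        simp [QuotientGroup.mk_mul, QuotientGroup.mk_inv, mul_assoc, -Subgroup.lowerCentralSeries_succ]
    _ = QuotientGroup.mk (pcomm a y) * QuotientGroup.mk (pcomm a x) := by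
        rw [conj_cancel hcen]
    _ = QuotientGroup.mk (pcomm a x) * QuotientGroup.mk (pcomm a y) :=
        (Subgroup.mem_center_iff.mp hcen _)

lemma pcomm_inv_left_mod {k : ℕ} {a : G} (ha : a ∈ (⊤ : Subgroup G).lowerCentralSeries k) (x : G) :
    (QuotientGroup.mk (pcomm a⁻¹ x) : G ⧸ (⊤ : Subgroup G).lowerCentralSeries (k + 2)) =
      (QuotientGroup.mk (pcomm a x))⁻¹ := by
  have h := pcomm_mul_left_mod ha (inv_mem ha) x
  rw [mul_inv_cancel, pcomm_one_left] at h
  have h1 : (QuotientGroup.mk (1 : G) : G ⧸ (⊤ : Subgroup G).lowerCentralSeries (k + 2)) = 1 := by simp [-Subgroup.lowerCentralSeries_succ]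
  rw [h1] at h
  exact eq_inv_of_mul_eq_one_right h.symm

lemma pcomm_inv_right_mod {k : ℕ} {a : G} (ha : a ∈ (⊤ : Subgroup G).lowerCentralSeries k) (x : G) :
    (QuotientGroup.mk (pcomm a x⁻¹) : G ⧸ (⊤ : Subgroup G).lowerCentralSeries (k + 2)) =
      (QuotientGroup.mk (pcomm a x))⁻¹ := by
  have h := pcomm_mul_right_mod ha x x⁻¹
  rw [mul_inv_cancel, pcomm_one_right] at h
  have h1 : (QuotientGroup.mk (1 : G) : G ⧸ (⊤ : Subgroup G).lowerCentralSeries (k + 2)) = 1 := by simp [-Subgroup.lowerCentralSeries_succ]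
  rw [h1] at h
  exact eq_inv_of_mul_eq_one_right h.symm

lemma pcomm_kill_mod {k : ℕ} {u : G} (hu : u ∈ (⊤ : Subgroup G).lowerCentralSeries (k + 1)) (x : G) :
    (QuotientGroup.mk (pcomm u x) : G ⧸ (⊤ : Subgroup G).lowerCentralSeries (k + 2)) = 1 := by
  rw [QuotientGroup.eq_one_iff]
  exact pcomm_mem_lcs hu x

lemma pcomm_list_mod {k : ℕ} (x : G) :
    ∀ l : List G, (∀ a ∈ l, a ∈ (⊤ : Subgroup G).lowerCentralSeries k) →
    (QuotientGroup.mk (pcomm l.prod x) : G ⧸ (⊤ : Subgroup G).lowerCentralSeries (k + 2)) =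
      (l.map (fun a => (QuotientGroup.mk (pcomm a x) : G ⧸ (⊤ : Subgroup G).lowerCentralSeries (k + 2)))).prod := by
  intro l
  induction l with
  | nil => intro _; simp [pcomm_one_left, -Subgroup.lowerCentralSeries_succ]
  | cons a t ih =>
      intro hmem
      have ha : a ∈ (⊤ : Subgroup G).lowerCentralSeries k := hmem a (by simp)
      have ht : ∀ b ∈ t, b ∈ (⊤ : Subgroup G).lowerCentralSeries k := fun b hb => hmem b (by simp [hb])
      have hprod : t.prod ∈ (⊤ : Subgroup G).lowerCentralSeries k := Subgroup.list_prod_mem _ ht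
      simp only [List.prod_cons, List.map_cons]
      rw [pcomm_mul_left_mod ha hprod, ih ht]

end Bilin
end Helpers
section CentralProd
variable {Q : Type*} [Group Q] {α : Type*}

lemma list_prod_mul_central (l : List α) (f g : α → Q)
    (hf : ∀ a : α, f a ∈ Subgroup.center Q) :
    (l.map (fun a => f a * g a)).prod = (l.map f).prod * (l.map g).prod := by
  induction l with
  | nil => simp
  | cons a t ih =>
    simp only [List.map_cons, List.prod_cons]
    rw [ih]
    have hX : (t.map f).prod ∈ Subgroup.center Q :=
      Subgroup.list_prod_mem _ (by
        intro x hx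
        obtain ⟨b, _, rfl⟩ := List.mem_map.mp hx
        exact hf b)
    have hsw : g a * (t.map f).prod = (t.map f).prod * g a :=
      Subgroup.mem_center_iff.mp hX (g a)
    calc f a * g a * ((t.map f).prod * (t.map g).prod)
        = f a * (g a * (t.map f).prod) * (t.map g).prod := by group
      _ = f a * ((t.map f).prod * g a) * (t.map g).prod := by rw [hsw]
      _ = f a * (t.map f).prod * (g a * (t.map g).prod) := by group

lemma list_prod_inv_central (l : List α) (f : α → Q)
    (hf : ∀ a : α, f a ∈ Subgroup.center Q) :
    (l.map (fun a => (f a)⁻¹)).prod = ((l.map f).prod)⁻¹ := by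
  induction l with
  | nil => simp
  | cons a t ih =>
    simp only [List.map_cons, List.prod_cons]
    rw [ih, mul_inv_rev]
    exact (Subgroup.mem_center_iff.mp (inv_mem (hf a)) _).symm

instance centerCommGroupLocal (Q : Type*) [Group Q] : CommGroup (Subgroup.center Q) :=
  { (inferInstance : Group (Subgroup.center Q)) with
    mul_comm := fun a b => Subtype.ext (Subgroup.mem_center_iff.mp b.2 a) }

lemma toList_map_prod_central (s : Finset α) (F : α → Q)
    (hF : ∀ a : α, F a ∈ Subgroup.center Q) :
    (s.toList.map F).prod =
      ((∏ a ∈ s, (⟨F a, hF a⟩ : Subgroup.center Q)) : Subgroup.center Q) := by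
  have h2 : (((s.toList.map (fun a => (⟨F a, hF a⟩ : Subgroup.center Q))).prod :
        Subgroup.center Q) : Q) =
      ((s.toList.map (fun a => (⟨F a, hF a⟩ : Subgroup.center Q))).map
        (Subgroup.center Q).subtype).prod :=
    map_list_prod (Subgroup.center Q).subtype _
  rw [← Finset.prod_map_toList, h2, List.map_map]
  rfl

end CentralProd

lemma keyL {G : Type*} [Group G] (S R : Finset G)
    (hgen : Subgroup.closure (S : Set G) = ⊤)
    (hR : ∀ s ∈ S, (({s, s⁻¹} : Finset G) ∩ R).card = 1) (n : ℕ) {g : G}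
    (hg : g ∈ (⊤ : Subgroup G).lowerCentralSeries (n + 1)) :
    ∃ c : {x // x ∈ R} → G, (∀ x, c x ∈ (⊤ : Subgroup G).lowerCentralSeries n) ∧
      (QuotientGroup.mk g : G ⧸ (⊤ : Subgroup G).lowerCentralSeries (n + 2)) =
        ((Finset.univ : Finset {x // x ∈ R}).toList.map
          (fun x => (QuotientGroup.mk (pcomm (c x) (x : G)) :
            G ⧸ (⊤ : Subgroup G).lowerCentralSeries (n + 2)))).prod := by
  classical
  let H : Subgroup (G ⧸ (⊤ : Subgroup G).lowerCentralSeries (n + 2)) :=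
  { carrier := {q | ∃ c : {x // x ∈ R} → G, (∀ x, c x ∈ (⊤ : Subgroup G).lowerCentralSeries n) ∧
      q = ((Finset.univ : Finset {x // x ∈ R}).toList.map
        (fun x => (QuotientGroup.mk (pcomm (c x) (x : G)) :
          G ⧸ (⊤ : Subgroup G).lowerCentralSeries (n + 2)))).prod}
    one_mem' := by
      refine ⟨fun _ => 1, fun _ => one_mem _, ?_⟩
      simp [pcomm_one_left, -Subgroup.lowerCentralSeries_succ]
    mul_mem' := by
      rintro p q ⟨c, hc, rfl⟩ ⟨c', hc', rfl⟩
      refine ⟨fun x => c x * c' x, fun x => mul_mem (hc x) (hc' x), ?_⟩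
      have heq : ∀ x : {x // x ∈ R},
          (QuotientGroup.mk (pcomm (c x * c' x) (x : G)) :
            G ⧸ (⊤ : Subgroup G).lowerCentralSeries (n + 2)) =
          QuotientGroup.mk (pcomm (c x) (x : G)) * QuotientGroup.mk (pcomm (c' x) (x : G)) :=
        fun x => pcomm_mul_left_mod (hc x) (hc' x) _
      simp only [heq]
      exact (list_prod_mul_central Finset.univ.toList
        (fun x : {x // x ∈ R} =>
          (QuotientGroup.mk (pcomm (c x) (x : G)) : G ⧸ (⊤ : Subgroup G).lowerCentralSeries (n + 2)))
        (fun x : {x // x ∈ R} =>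
          (QuotientGroup.mk (pcomm (c' x) (x : G)) : G ⧸ (⊤ : Subgroup G).lowerCentralSeries (n + 2)))
        (fun x => mk_mem_center (pcomm_mem_lcs (hc x) ((x : G))))).symm
    inv_mem' := by
      rintro p ⟨c, hc, rfl⟩
      refine ⟨fun x => (c x)⁻¹, fun x => inv_mem (hc x), ?_⟩
      have heq : ∀ x : {x // x ∈ R},
          (QuotientGroup.mk (pcomm (c x)⁻¹ (x : G)) :
            G ⧸ (⊤ : Subgroup G).lowerCentralSeries (n + 2)) =
          (QuotientGroup.mk (pcomm (c x) (x : G)))⁻¹ :=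
        fun x => pcomm_inv_left_mod (hc x) _
      simp only [heq]
      exact (list_prod_inv_central Finset.univ.toList
        (fun x : {x // x ∈ R} =>
          (QuotientGroup.mk (pcomm (c x) (x : G)) : G ⧸ (⊤ : Subgroup G).lowerCentralSeries (n + 2)))
        (fun x => mk_mem_center (pcomm_mem_lcs (hc x) ((x : G))))).symm }
  have hsingle : ∀ (x : G) (hx : x ∈ R) (a : G), a ∈ (⊤ : Subgroup G).lowerCentralSeries n →
      (QuotientGroup.mk (pcomm a x) : G ⧸ (⊤ : Subgroup G).lowerCentralSeries (n + 2)) ∈ H := by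
    intro x hx a ha
    let f : {x // x ∈ R} → G := fun z => if z = ⟨x, hx⟩ then a else 1
    have hfmem : ∀ z, f z ∈ (⊤ : Subgroup G).lowerCentralSeries n := by
      intro z
      by_cases h : z = ⟨x, hx⟩
      · simpa [f, h] using ha
      · simpa [f, h] using one_mem ((⊤ : Subgroup G).lowerCentralSeries n)
    refine ⟨f, hfmem, ?_⟩
    have hFcen : ∀ z : {x // x ∈ R},
        (QuotientGroup.mk (pcomm (f z) (z : G)) : G ⧸ (⊤ : Subgroup G).lowerCentralSeries (n + 2)) ∈
          Subgroup.center _ := fun z => mk_mem_center (pcomm_mem_lcs (hfmem z) ((z : G)))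
    rw [toList_map_prod_central Finset.univ _ hFcen]
    rw [Finset.prod_eq_single (⟨x, hx⟩ : {x // x ∈ R})]
    · simp [f]
    · intro z _ hz
      apply Subtype.ext
      simp [f, if_neg hz, pcomm_one_left, -Subgroup.lowerCentralSeries_succ]
    · intro h
      exact absurd (Finset.mem_univ _) h
  have hHpc : ∀ y : G, ∀ a ∈ (⊤ : Subgroup G).lowerCentralSeries n,
      (QuotientGroup.mk (pcomm a y) : G ⧸ (⊤ : Subgroup G).lowerCentralSeries (n + 2)) ∈ H := by
    let T : Subgroup G :=
    { carrier := {y | ∀ a ∈ (⊤ : Subgroup G).lowerCentralSeries n,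
        (QuotientGroup.mk (pcomm a y) : G ⧸ (⊤ : Subgroup G).lowerCentralSeries (n + 2)) ∈ H}
      one_mem' := by
        intro a _
        rw [pcomm_one_right]
        simpa [-Subgroup.lowerCentralSeries_succ] using H.one_mem
      mul_mem' := by
        intro x y hx hy a ha
        rw [pcomm_mul_right_mod ha x y]
        exact H.mul_mem (hx a ha) (hy a ha)
      inv_mem' := by
        intro x hx a ha
        rw [pcomm_inv_right_mod ha x]
        exact H.inv_mem (hx a ha) }
    have hST : (S : Set G) ⊆ T := by
      intro s hs
      have hsS : s ∈ S := hs
      have hne : (({s, s⁻¹} : Finset G) ∩ R).Nonempty := by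
        rw [← Finset.card_pos, hR s hsS]; norm_num
      obtain ⟨t, ht⟩ := hne
      rw [Finset.mem_inter] at ht
      obtain ⟨hts, htR⟩ := ht
      show ∀ a ∈ (⊤ : Subgroup G).lowerCentralSeries n,
        (QuotientGroup.mk (pcomm a s) : G ⧸ (⊤ : Subgroup G).lowerCentralSeries (n + 2)) ∈ H
      intro a ha
      rcases Finset.mem_insert.mp hts with h | h
      · exact hsingle s (h ▸ htR) a ha
      · have h' : t = s⁻¹ := Finset.mem_singleton.mp h
        have e1 : (QuotientGroup.mk (pcomm a s) : G ⧸ (⊤ : Subgroup G).lowerCentralSeries (n + 2)) =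
            QuotientGroup.mk (pcomm a⁻¹ s⁻¹) := by
          rw [pcomm_inv_left_mod ha s⁻¹, pcomm_inv_right_mod ha s, inv_inv]
        rw [e1]
        exact hsingle s⁻¹ (h' ▸ htR) a⁻¹ (inv_mem ha)
    have hT : (⊤ : Subgroup G) ≤ T := by
      rw [← hgen]
      exact (Subgroup.closure_le T).mpr hST
    intro y a ha
    exact (hT (Subgroup.mem_top y)) a ha
  have hgen2 : g ∈ Subgroup.closure
      {x : G | ∃ p ∈ (⊤ : Subgroup G).lowerCentralSeries n, ∃ q ∈ (⊤ : Subgroup G), p * q * p⁻¹ * q⁻¹ = x} := by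
    exact hg
  have hle : Subgroup.closure
      {x : G | ∃ p ∈ (⊤ : Subgroup G).lowerCentralSeries n, ∃ q ∈ (⊤ : Subgroup G), p * q * p⁻¹ * q⁻¹ = x} ≤
      H.comap (QuotientGroup.mk' ((⊤ : Subgroup G).lowerCentralSeries (n + 2))) := by
    rw [Subgroup.closure_le]
    rintro x ⟨p, hp, q, -, rfl⟩
    rw [SetLike.mem_coe, Subgroup.mem_comap]
    have hid : p * q * p⁻¹ * q⁻¹ = pcomm p⁻¹ q⁻¹ := by simp [pcomm]
    show (QuotientGroup.mk (p * q * p⁻¹ * q⁻¹) : G ⧸ (⊤ : Subgroup G).lowerCentralSeries (n + 2)) ∈ H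
    rw [hid]
    exact hHpc q⁻¹ p⁻¹ (inv_mem hp)
  have hmem := hle hgen2
  rw [Subgroup.mem_comap] at hmem
  obtain ⟨c, hc, he⟩ := hmem
  exact ⟨c, hc, he⟩

lemma baseCase {G : Type*} [Group G] [Fintype G] (S : Finset G)
    (hS : ∀ s : G, s ∈ S ↔ s⁻¹ ∈ S) (hgen : Subgroup.closure (S : Set G) = ⊤) (g : G) :
    ∃ ℓ : G → ℕ,
      ((∑ s ∈ S, ℓ s) ≤ quotDiam (S : Set G) (Set.univ : Set G) (commutator G : Set G) ∧
        ∀ s ∈ S, s ≠ s⁻¹ → ℓ s * ℓ s⁻¹ = 0) ∧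
      (QuotientGroup.mk g : G ⧸ (⊤ : Subgroup G).lowerCentralSeries 1) =
        (S.toList.map (fun s =>
          (QuotientGroup.mk (s ^ ℓ s) : G ⧸ (⊤ : Subgroup G).lowerCentralSeries 1))).prod := by
  classical
  have hword : ∀ h : G, ∃ l : List G, (∀ x ∈ l, x ∈ (S : Set G)) ∧ l.prod = h := by
    intro h
    have h1 : h ∈ Subgroup.closure (S : Set G) := by rw [hgen]; trivial
    have hU : (S : Set G) ∪ (S : Set G)⁻¹ = (S : Set G) := by
      apply Set.union_eq_self_of_subset_right
      intro x hx
      rw [Set.mem_inv] at hx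
      exact Finset.mem_coe.mpr ((hS x).mpr (Finset.mem_coe.mp hx))
    have h2 : h ∈ Submonoid.closure ((S : Set G) ∪ (S : Set G)⁻¹) := by
      rw [← Subgroup.closure_toSubmonoid]; exact h1
    rw [hU] at h2
    exact Submonoid.exists_list_of_mem_closure h2
  have hset : {D | ∀ h ∈ (Set.univ : Set G), ∃ l : List G, (∀ x ∈ l, x ∈ (S : Set G)) ∧
      l.length ≤ D ∧ ∃ u ∈ (commutator G : Set G), h = l.prod * u}.Nonempty := by
    choose f hf1 hf2 using hword
    refine ⟨Finset.univ.sup (fun h => (f h).length), ?_⟩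
    intro h _
    exact ⟨f h, hf1 h, Finset.le_sup (f := fun h => (f h).length) (Finset.mem_univ h),
      1, one_mem _, by rw [hf2 h, mul_one]⟩
  have hDmem : ∀ h ∈ (Set.univ : Set G), ∃ l : List G, (∀ x ∈ l, x ∈ (S : Set G)) ∧
      l.length ≤ quotDiam (S : Set G) (Set.univ : Set G) (commutator G : Set G) ∧
      ∃ u ∈ (commutator G : Set G), h = l.prod * u := Nat.sInf_mem hset
  obtain ⟨l, hl, hlen, u, hu, hgu⟩ := hDmem g (Set.mem_univ g)
  have hsub : l.toFinset ⊆ S := by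
    intro x hx
    exact Finset.mem_coe.mp (hl x (List.mem_toFinset.mp hx))
  refine ⟨fun s => if s = s⁻¹ then l.count s else l.count s - l.count s⁻¹, ⟨?_, ?_⟩, ?_⟩
  · calc ∑ s ∈ S, (if s = s⁻¹ then l.count s else l.count s - l.count s⁻¹)
        ≤ ∑ s ∈ S, l.count s := by
          apply Finset.sum_le_sum
          intro s _
          split
          · exact le_refl _
          · exact Nat.sub_le _ _
      _ = l.length := by
          rw [← Finset.sum_subset hsub (fun x _ hx =>
            List.count_eq_zero_of_not_mem (fun hm => hx (List.mem_toFinset.mpr hm)))]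
          have hms := Multiset.toFinset_sum_count_eq (l : Multiset G)
          simpa using hms
      _ ≤ _ := hlen
  · intro s _ hss
    have h2 : ¬ (s⁻¹ = s) := fun e => hss e.symm
    simp only [inv_inv, if_neg hss, if_neg h2]
    rcases le_total (l.count s) (l.count s⁻¹) with h | h
    · rw [Nat.sub_eq_zero_of_le h, zero_mul]
    · rw [Nat.sub_eq_zero_of_le h, mul_zero]
  · have hcen : ∀ a : G, (QuotientGroup.mk a : G ⧸ (⊤ : Subgroup G).lowerCentralSeries 1) ∈
        Subgroup.center (G ⧸ (⊤ : Subgroup G).lowerCentralSeries 1) := by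
      intro a
      have h0 : a ∈ (⊤ : Subgroup G).lowerCentralSeries 0 := by
        rw [Subgroup.lowerCentralSeries_zero]; trivial
      exact mk_mem_center h0
    set φ : G →* Subgroup.center (G ⧸ (⊤ : Subgroup G).lowerCentralSeries 1) :=
    { toFun := fun a => ⟨QuotientGroup.mk a, hcen a⟩
      map_one' := by apply Subtype.ext; simp [-Subgroup.lowerCentralSeries_succ]
      map_mul' := by intro a b; apply Subtype.ext; simp [-Subgroup.lowerCentralSeries_succ] } with hφ
    have hu1 : (QuotientGroup.mk u : G ⧸ (⊤ : Subgroup G).lowerCentralSeries 1) = 1 := by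
      rw [QuotientGroup.eq_one_iff, Subgroup.top_lowerCentralSeries_one]
      exact hu
    have key : φ g = ∏ s ∈ S,
        φ s ^ (if s = s⁻¹ then l.count s else l.count s - l.count s⁻¹) := by
      have e0 : φ g = φ l.prod := by
        apply Subtype.ext
        show (QuotientGroup.mk g : G ⧸ (⊤ : Subgroup G).lowerCentralSeries 1) = QuotientGroup.mk l.prod
        rw [hgu, QuotientGroup.mk_mul, hu1, mul_one]
      have e1 : φ l.prod = (l.map φ).prod := map_list_prod φ l
      have e2 : (l.map φ).prod = ∏ m ∈ l.toFinset, φ m ^ l.count m :=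
        Finset.prod_list_map_count l φ
      have e3 : ∏ m ∈ l.toFinset, φ m ^ l.count m = ∏ s ∈ S, φ s ^ l.count s := by
        apply Finset.prod_subset hsub
        intro x _ hx
        rw [List.count_eq_zero_of_not_mem (fun hm => hx (List.mem_toFinset.mpr hm)),
          pow_zero]
      have e4 : ∏ s ∈ S, φ s ^ l.count s =
          (∏ s ∈ S, φ s ^ (if s = s⁻¹ then l.count s else l.count s - l.count s⁻¹)) *
            ∏ s ∈ S, φ s ^ (if s = s⁻¹ then 0 else min (l.count s) (l.count s⁻¹)) := by
        rw [← Finset.prod_mul_distrib]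
        apply Finset.prod_congr rfl
        intro s _
        rw [← pow_add]
        congr 1
        split
        · omega
        · omega
      have e5 : ∏ s ∈ S, φ s ^ (if s = s⁻¹ then 0 else min (l.count s) (l.count s⁻¹)) = 1 := by
        apply Finset.prod_involution (fun s _ => s⁻¹)
        · intro s hs
          by_cases h : s = s⁻¹
          · rw [if_pos h, pow_zero, ← h, if_pos h, pow_zero, mul_one]
          · have h1 : ¬ (s⁻¹ = s⁻¹⁻¹) := by rw [inv_inv]; exact fun e => h e.symm
            rw [if_neg h, if_neg h1, inv_inv, min_comm (l.count s⁻¹) (l.count s),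
              map_inv, inv_pow, mul_inv_cancel]
        · intro s hs hfne he
          apply hfne
          rw [if_pos he.symm, pow_zero]
        · intro s hs
          simp
        · intro s hs
          exact (hS s).mp hs
      rw [e0, e1, e2, e3, e4, e5, mul_one]
    have hFcen : ∀ s : G,
        (QuotientGroup.mk (s ^ (if s = s⁻¹ then l.count s else l.count s - l.count s⁻¹)) :
          G ⧸ (⊤ : Subgroup G).lowerCentralSeries 1) ∈ Subgroup.center (G ⧸ (⊤ : Subgroup G).lowerCentralSeries 1) :=
      fun s => hcen _
    rw [toList_map_prod_central S _ hFcen]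
    have hfinal : (⟨QuotientGroup.mk g, hcen g⟩ : Subgroup.center (G ⧸ (⊤ : Subgroup G).lowerCentralSeries 1)) =
        ∏ s ∈ S, (⟨QuotientGroup.mk
          (s ^ (if s = s⁻¹ then l.count s else l.count s - l.count s⁻¹)), hFcen s⟩ :
            Subgroup.center (G ⧸ (⊤ : Subgroup G).lowerCentralSeries 1)) := by
      rw [show (⟨QuotientGroup.mk g, hcen g⟩ :
        Subgroup.center (G ⧸ (⊤ : Subgroup G).lowerCentralSeries 1)) = φ g from rfl, key]
      apply Finset.prod_congr rfl
      intro s _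
      apply Subtype.ext
      rw [SubmonoidClass.coe_pow]
      exact (map_pow (QuotientGroup.mk' ((⊤ : Subgroup G).lowerCentralSeries 1)) s _).symm
    exact congrArg Subtype.val hfinal

lemma map_nested_prod {G H : Type*} [Group G] [Group H] (π : G →* H) {α β : Type*}
    (L1 : List α) (L2 : List β) (f : α → β → G) :
    (L1.map (fun a => (L2.map (fun b => π (f a b))).prod)).prod =
      π ((L1.map (fun a => (L2.map (f a)).prod)).prod) := by
  induction L1 with
  | nil => simp
  | cons a t ih =>
    simp only [List.map_cons, List.prod_cons, map_mul]
    rw [ih]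
    congr 1
    rw [map_list_prod, List.map_map]
    rfl

lemma aux_main {G : Type*} [Group G] [Fintype G] (S R : Finset G)
    (hS : ∀ s : G, s ∈ S ↔ s⁻¹ ∈ S) (hgen : Subgroup.closure (S : Set G) = ⊤)
    (hR : ∀ s ∈ S, (({s, s⁻¹} : Finset G) ∩ R).card = 1) :
    ∀ n : ℕ, ∀ g ∈ (⊤ : Subgroup G).lowerCentralSeries n,
      ∃ ℓ : (Fin n → G) → G → ℕ,
        (∀ τ : Fin n → G, (∀ j, τ j ∈ R) →
          (∑ s ∈ S, ℓ τ s) ≤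
              quotDiam (S : Set G) (Set.univ : Set G) (commutator G : Set G) ∧
            ∀ s ∈ S, s ≠ s⁻¹ → ℓ τ s * ℓ τ s⁻¹ = 0) ∧
        QuotientGroup.mk' ((⊤ : Subgroup G).lowerCentralSeries (n + 1)) g =
          ((Finset.univ : Finset (Fin n → {x // x ∈ R})).toList.map (fun τ =>
            (S.toList.map (fun s =>
              QuotientGroup.mk' ((⊤ : Subgroup G).lowerCentralSeries (n + 1))
                (rho (s ^ ℓ (fun j => (τ j : G)) s)
                  (List.ofFn (fun j => ((τ j : G))))))).prod)).prod := by
  classical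
  intro n
  induction n with
  | zero =>
    intro g hg
    obtain ⟨ℓ0, ⟨hsum, hzero⟩, heq⟩ := baseCase S hS hgen g
    refine ⟨fun _ => ℓ0, fun τ _ => ⟨hsum, hzero⟩, ?_⟩
    have h0 : (Finset.univ : Finset (Fin 0 → {x // x ∈ R})) = {fun j => j.elim0} := by
      apply Finset.eq_singleton_iff_unique_mem.mpr
      refine ⟨Finset.mem_univ _, fun f _ => ?_⟩
      funext j; exact j.elim0
    rw [h0, Finset.toList_singleton]
    simp only [List.map_cons, List.map_nil, List.prod_cons, List.prod_nil, mul_one,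
      List.ofFn_zero, QuotientGroup.mk'_apply]
    have heq' : (QuotientGroup.mk g : G ⧸ (⊤ : Subgroup G).lowerCentralSeries (0 + 1)) =
        (S.toList.map (fun s =>
          (QuotientGroup.mk (s ^ ℓ0 s) : G ⧸ (⊤ : Subgroup G).lowerCentralSeries (0 + 1)))).prod := heq
    simpa [rho] using heq'
  | succ n ih =>
    intro g hg
    obtain ⟨c, hc, hceq0⟩ := keyL S R hgen hR n hg
    have hceq : (QuotientGroup.mk g : G ⧸ (⊤ : Subgroup G).lowerCentralSeries (n + 1 + 1)) =
        ((Finset.univ : Finset {x // x ∈ R}).toList.map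
          (fun x => (QuotientGroup.mk (pcomm (c x) (x : G)) :
            G ⧸ (⊤ : Subgroup G).lowerCentralSeries (n + 1 + 1)))).prod := hceq0
    choose ℓf hℓc hℓeq using fun x : {x // x ∈ R} => ih (c x) (hc x)
    refine ⟨fun σ s => if h : σ (Fin.last n) ∈ R then
        ℓf ⟨σ (Fin.last n), h⟩ (fun j => σ j.castSucc) s else 0, ?_, ?_⟩
    · intro τ hτ
      have hlast : τ (Fin.last n) ∈ R := hτ _
      have hres := hℓc ⟨τ (Fin.last n), hlast⟩ (fun j => τ j.castSucc) (fun j => hτ _)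
      simp only [dif_pos hlast]
      exact hres
    · -- the big coset identity
      -- central rho terms at level n+1
      have hrmem : ∀ (σ : Fin (n + 1) → {x // x ∈ R}) (s : G),
          rho (s ^ ℓf (σ (Fin.last n)) (fun j => ((σ j.castSucc : G))) s)
            (List.ofFn (fun j : Fin (n + 1) => ((σ j : G)))) ∈
            (⊤ : Subgroup G).lowerCentralSeries (n + 1) := by
        intro σ s
        have h0 : s ^ ℓf (σ (Fin.last n)) (fun j => ((σ j.castSucc : G))) s ∈
            (⊤ : Subgroup G).lowerCentralSeries 0 := by
          rw [Subgroup.lowerCentralSeries_zero]; trivial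
        have hr := rho_mem_lcs h0 (List.ofFn (fun j : Fin (n + 1) => ((σ j : G))))
        simpa using hr
      have hrcen : ∀ (σ : Fin (n + 1) → {x // x ∈ R}) (s : G),
          (QuotientGroup.mk (rho (s ^ ℓf (σ (Fin.last n)) (fun j => ((σ j.castSucc : G))) s)
              (List.ofFn (fun j : Fin (n + 1) => ((σ j : G))))) :
            G ⧸ (⊤ : Subgroup G).lowerCentralSeries (n + 1 + 1)) ∈
            Subgroup.center (G ⧸ (⊤ : Subgroup G).lowerCentralSeries (n + 1 + 1)) :=
        fun σ s => mk_mem_center (hrmem σ s)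
      set FC : (Fin (n + 1) → {x // x ∈ R}) → G →
          Subgroup.center (G ⧸ (⊤ : Subgroup G).lowerCentralSeries (n + 1 + 1)) :=
        fun σ s => ⟨QuotientGroup.mk (rho (s ^ ℓf (σ (Fin.last n))
          (fun j => ((σ j.castSucc : G))) s)
          (List.ofFn (fun j : Fin (n + 1) => ((σ j : G))))), hrcen σ s⟩ with hFC
      -- star identity
      have hstar : ∀ x : {x // x ∈ R},
          (QuotientGroup.mk (pcomm (c x) ((x : G))) :
              G ⧸ (⊤ : Subgroup G).lowerCentralSeries (n + 1 + 1)) =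
            ((∏ τ : Fin n → {x // x ∈ R}, ∏ s ∈ S, FC (Fin.snoc τ x) s :
              Subgroup.center (G ⧸ (⊤ : Subgroup G).lowerCentralSeries (n + 1 + 1))) : _) := by
        intro x
        -- inner data at level n
        have hrtmem : ∀ (τ : Fin n → {x // x ∈ R}) (s : G),
            rho (s ^ ℓf x (fun j => ((τ j : G))) s)
              (List.ofFn (fun j : Fin n => ((τ j : G)))) ∈ (⊤ : Subgroup G).lowerCentralSeries n := by
          intro τ s
          have h0 : s ^ ℓf x (fun j => ((τ j : G))) s ∈ (⊤ : Subgroup G).lowerCentralSeries 0 := by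
            rw [Subgroup.lowerCentralSeries_zero]; trivial
          have hr := rho_mem_lcs h0 (List.ofFn (fun j : Fin n => ((τ j : G))))
          simpa using hr
        set Fx : (Fin n → {x // x ∈ R}) → G := fun τ =>
          (S.toList.map (fun s => rho (s ^ ℓf x (fun j => ((τ j : G))) s)
            (List.ofFn (fun j : Fin n => ((τ j : G)))))).prod with hFx
        have hFxmem : ∀ τ, Fx τ ∈ (⊤ : Subgroup G).lowerCentralSeries n := by
          intro τ
          apply Subgroup.list_prod_mem
          intro a ha
          obtain ⟨s, _, rfl⟩ := List.mem_map.mp ha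
          exact hrtmem τ s
        set W : G := ((Finset.univ : Finset (Fin n → {x // x ∈ R})).toList.map Fx).prod
          with hWdef
        have hWmem : W ∈ (⊤ : Subgroup G).lowerCentralSeries n := by
          apply Subgroup.list_prod_mem
          intro a ha
          obtain ⟨τ, _, rfl⟩ := List.mem_map.mp ha
          exact hFxmem τ
        have hcW : (QuotientGroup.mk (c x) : G ⧸ (⊤ : Subgroup G).lowerCentralSeries (n + 1)) =
            QuotientGroup.mk W := by
          calc (QuotientGroup.mk (c x) : G ⧸ (⊤ : Subgroup G).lowerCentralSeries (n + 1))
              = ((Finset.univ : Finset (Fin n → {x // x ∈ R})).toList.map (fun τ =>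
                  (S.toList.map (fun s =>
                    QuotientGroup.mk' ((⊤ : Subgroup G).lowerCentralSeries (n + 1))
                      (rho (s ^ ℓf x (fun j => ((τ j : G))) s)
                        (List.ofFn (fun j : Fin n => ((τ j : G))))))).prod)).prod :=
                hℓeq x
            _ = QuotientGroup.mk W :=
                map_nested_prod (QuotientGroup.mk' ((⊤ : Subgroup G).lowerCentralSeries (n + 1))) _ _ _
        have hu : W⁻¹ * c x ∈ (⊤ : Subgroup G).lowerCentralSeries (n + 1) :=
          QuotientGroup.eq.mp hcW.symm
        have hpc : (QuotientGroup.mk (pcomm (c x) ((x : G))) :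
            G ⧸ (⊤ : Subgroup G).lowerCentralSeries (n + 1 + 1)) =
            QuotientGroup.mk (pcomm W ((x : G))) := by
          have hdecomp : c x = W * (W⁻¹ * c x) := by group
          have hstep2 := pcomm_mul_left_mod hWmem
            (Subgroup.lowerCentralSeries_antitone ⊤ (Nat.le_succ n) hu) ((x : G))
          have hkill := pcomm_kill_mod hu ((x : G))
          conv_lhs => rw [hdecomp]
          rw [hstep2, hkill, mul_one]
        have hexp : (QuotientGroup.mk (pcomm W ((x : G))) :
            G ⧸ (⊤ : Subgroup G).lowerCentralSeries (n + 1 + 1)) =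
            (((Finset.univ : Finset (Fin n → {x // x ∈ R})).toList.map Fx).map
              (fun a => (QuotientGroup.mk (pcomm a ((x : G))) :
                G ⧸ (⊤ : Subgroup G).lowerCentralSeries (n + 1 + 1)))).prod := by
          have := pcomm_list_mod ((x : G))
            (((Finset.univ : Finset (Fin n → {x // x ∈ R})).toList.map Fx))
            (by
              intro a ha
              obtain ⟨τ, _, rfl⟩ := List.mem_map.mp ha
              exact hFxmem τ)
          exact this
        have hinner2 : ∀ τ : Fin n → {x // x ∈ R},
            (QuotientGroup.mk (pcomm (Fx τ) ((x : G))) :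
                G ⧸ (⊤ : Subgroup G).lowerCentralSeries (n + 1 + 1)) =
              ((∏ s ∈ S, FC (Fin.snoc τ x) s :
                Subgroup.center (G ⧸ (⊤ : Subgroup G).lowerCentralSeries (n + 1 + 1))) : _) := by
          intro τ
          have h1 : (QuotientGroup.mk (pcomm (Fx τ) ((x : G))) :
              G ⧸ (⊤ : Subgroup G).lowerCentralSeries (n + 1 + 1)) =
              ((S.toList.map (fun s => rho (s ^ ℓf x (fun j => ((τ j : G))) s)
                (List.ofFn (fun j : Fin n => ((τ j : G)))))).map
                (fun a => (QuotientGroup.mk (pcomm a ((x : G))) :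
                  G ⧸ (⊤ : Subgroup G).lowerCentralSeries (n + 1 + 1)))).prod := by
            have := pcomm_list_mod ((x : G))
              ((S.toList.map (fun s => rho (s ^ ℓf x (fun j => ((τ j : G))) s)
                (List.ofFn (fun j : Fin n => ((τ j : G)))))))
              (by
                intro a ha
                obtain ⟨s, _, rfl⟩ := List.mem_map.mp ha
                exact hrtmem τ s)
            exact this
          have h2 : ∀ s : G,
              pcomm (rho (s ^ ℓf x (fun j => ((τ j : G))) s)
                (List.ofFn (fun j : Fin n => ((τ j : G))))) ((x : G)) =
              rho (s ^ ℓf ((Fin.snoc τ x : Fin (n+1) → {x // x ∈ R}) (Fin.last n))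
                (fun j => (((Fin.snoc τ x : Fin (n+1) → {x // x ∈ R}) j.castSucc : G))) s)
                (List.ofFn (fun j : Fin (n + 1) =>
                  (((Fin.snoc τ x : Fin (n+1) → {x // x ∈ R}) j : G)))) := by
            intro s
            have hexpo : ℓf ((Fin.snoc τ x : Fin (n+1) → {x // x ∈ R}) (Fin.last n))
                (fun j => (((Fin.snoc τ x : Fin (n+1) → {x // x ∈ R}) j.castSucc : G))) s =
                ℓf x (fun j => ((τ j : G))) s := by
              simp [Fin.snoc_last, Fin.snoc_castSucc]
            have hlist : List.ofFn (fun j : Fin (n + 1) =>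
                (((Fin.snoc τ x : Fin (n+1) → {x // x ∈ R}) j : G))) =
                List.ofFn (fun j : Fin n => ((τ j : G))) ++ [((x : G))] := by
              rw [List.ofFn_succ', List.concat_eq_append]
              congr 1
              · congr 1
                funext j
                simp [Fin.snoc_castSucc]
              · simp [Fin.snoc_last]
            rw [hexpo, hlist, ← rho_append_singleton]
          rw [h1, List.map_map]
          have h3 : ((fun a => (QuotientGroup.mk (pcomm a ((x : G))) :
              G ⧸ (⊤ : Subgroup G).lowerCentralSeries (n + 1 + 1))) ∘
              (fun s => rho (s ^ ℓf x (fun j => ((τ j : G))) s)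
                (List.ofFn (fun j : Fin n => ((τ j : G)))))) =
              fun s => ((FC (Fin.snoc τ x) s :
                Subgroup.center (G ⧸ (⊤ : Subgroup G).lowerCentralSeries (n + 1 + 1))) :
                  G ⧸ (⊤ : Subgroup G).lowerCentralSeries (n + 1 + 1)) := by
            funext s
            show (QuotientGroup.mk (pcomm (rho _ _) ((x : G))) : _) = _
            rw [h2 s]
            try rfl
          rw [h3]
          rw [toList_map_prod_central S _ (fun s => (FC (Fin.snoc τ x) s).2)]
          try congr 1
          try exact Finset.prod_congr rfl (fun s _ => Subtype.ext rfl)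
        rw [hpc, hexp, List.map_map]
        have h4 : ((fun a => (QuotientGroup.mk (pcomm a ((x : G))) :
            G ⧸ (⊤ : Subgroup G).lowerCentralSeries (n + 1 + 1))) ∘ Fx) =
            fun τ => ((∏ s ∈ S, FC (Fin.snoc τ x) s :
              Subgroup.center (G ⧸ (⊤ : Subgroup G).lowerCentralSeries (n + 1 + 1))) :
                G ⧸ (⊤ : Subgroup G).lowerCentralSeries (n + 1 + 1)) := by
          funext τ
          exact hinner2 τ
        rw [h4]
        rw [toList_map_prod_central Finset.univ _
          (fun τ => (∏ s ∈ S, FC (Fin.snoc τ x) s).2)]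
        try congr 1
        try exact Finset.prod_congr rfl (fun τ _ => Subtype.ext rfl)
      -- finish
      have hdite : ∀ (τ : Fin (n + 1) → {x // x ∈ R}) (s : G),
          (if h : ((τ (Fin.last n) : G)) ∈ R then
            ℓf ⟨((τ (Fin.last n) : G)), h⟩ (fun j => ((τ j.castSucc : G))) s else 0) =
          ℓf (τ (Fin.last n)) (fun j => ((τ j.castSucc : G))) s := by
        intro τ s
        rw [dif_pos (τ (Fin.last n)).2]
        try exact congrFun (congrFun (congrArg ℓf (Subtype.coe_eta _ _)) _) s
      have hinner : ∀ σ : Fin (n + 1) → {x // x ∈ R},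
          (S.toList.map (fun s =>
            (QuotientGroup.mk (rho (s ^ ℓf (σ (Fin.last n))
                (fun j => ((σ j.castSucc : G))) s)
              (List.ofFn (fun j : Fin (n + 1) => ((σ j : G))))) :
              G ⧸ (⊤ : Subgroup G).lowerCentralSeries (n + 1 + 1)))).prod =
            ((∏ s ∈ S, FC σ s :
              Subgroup.center (G ⧸ (⊤ : Subgroup G).lowerCentralSeries (n + 1 + 1))) : _) := by
        intro σ
        rw [toList_map_prod_central S _ (fun s => hrcen σ s)]
        try congr 1
        try exact Finset.prod_congr rfl (fun s _ => Subtype.ext rfl)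
      have hEq : (∏ x : {x // x ∈ R}, ∏ τ : Fin n → {x // x ∈ R},
          ∏ s ∈ S, FC (Fin.snoc τ x) s) =
          ∏ σ : Fin (n + 1) → {x // x ∈ R}, ∏ s ∈ S, FC σ s := by
        have h7 : (∏ x : {x // x ∈ R}, ∏ τ : Fin n → {x // x ∈ R},
            ∏ s ∈ S, FC (Fin.snoc τ x) s) =
            ∏ p : {x // x ∈ R} × (Fin n → {x // x ∈ R}),
              ∏ s ∈ S, FC (Fin.snoc p.2 p.1) s := by
          rw [← Finset.univ_product_univ]
          exact (Finset.prod_product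
            (f := fun p : {x // x ∈ R} × (Fin n → {x // x ∈ R}) =>
              ∏ s ∈ S, FC (Fin.snoc p.2 p.1) s) _ _).symm
        rw [h7]
        let e : ({x // x ∈ R} × (Fin n → {x // x ∈ R})) ≃ (Fin (n + 1) → {x // x ∈ R}) :=
          { toFun := fun p => Fin.snoc p.2 p.1
            invFun := fun σ => (σ (Fin.last n), fun j => σ j.castSucc)
            left_inv := by
              intro p
              simp [Fin.snoc_last, Fin.snoc_castSucc]
            right_inv := by
              intro σ
              funext j
              refine Fin.lastCases ?_ ?_ j
              · simp [Fin.snoc_last]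
              · intro i
                simp [Fin.snoc_castSucc] }
        exact Fintype.prod_equiv e _ _ (fun p => rfl)
      simp only [QuotientGroup.mk'_apply, hdite]
      rw [hceq]
      have h5 : (fun x : {x // x ∈ R} =>
          (QuotientGroup.mk (pcomm (c x) ((x : G))) :
            G ⧸ (⊤ : Subgroup G).lowerCentralSeries (n + 1 + 1))) =
          fun x => ((∏ τ : Fin n → {x // x ∈ R}, ∏ s ∈ S, FC (Fin.snoc τ x) s :
            Subgroup.center (G ⧸ (⊤ : Subgroup G).lowerCentralSeries (n + 1 + 1))) :
              G ⧸ (⊤ : Subgroup G).lowerCentralSeries (n + 1 + 1)) := by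
        funext x
        exact hstar x
      rw [h5]
      rw [toList_map_prod_central Finset.univ _
        (fun x => (∏ τ : Fin n → {x // x ∈ R}, ∏ s ∈ S, FC (Fin.snoc τ x) s).2)]
      have h6 : (fun σ : Fin (n + 1) → {x // x ∈ R} =>
          (S.toList.map (fun s =>
            (QuotientGroup.mk (rho (s ^ ℓf (σ (Fin.last n))
                (fun j => ((σ j.castSucc : G))) s)
              (List.ofFn (fun j : Fin (n + 1) => ((σ j : G))))) :
              G ⧸ (⊤ : Subgroup G).lowerCentralSeries (n + 1 + 1)))).prod) =
          fun σ => ((∏ s ∈ S, FC σ s :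
            Subgroup.center (G ⧸ (⊤ : Subgroup G).lowerCentralSeries (n + 1 + 1))) :
              G ⧸ (⊤ : Subgroup G).lowerCentralSeries (n + 1 + 1)) := by
        funext σ
        exact hinner σ
      rw [h6]
      rw [toList_map_prod_central Finset.univ _ (fun σ => (∏ s ∈ S, FC σ s).2)]
      try {
        congr 1
        calc (∏ x : {x // x ∈ R},
              (⟨_, (∏ τ : Fin n → {x // x ∈ R}, ∏ s ∈ S, FC (Fin.snoc τ x) s).2⟩ :
                Subgroup.center (G ⧸ (⊤ : Subgroup G).lowerCentralSeries (n + 1 + 1))))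
            = ∏ x : {x // x ∈ R}, ∏ τ : Fin n → {x // x ∈ R},
                ∏ s ∈ S, FC (Fin.snoc τ x) s :=
              Finset.prod_congr rfl (fun x _ => Subtype.ext rfl)
          _ = ∏ σ : Fin (n + 1) → {x // x ∈ R}, ∏ s ∈ S, FC σ s := hEq
          _ = ∏ σ : Fin (n + 1) → {x // x ∈ R},
                (⟨_, (∏ s ∈ S, FC σ s).2⟩ :
                  Subgroup.center (G ⧸ (⊤ : Subgroup G).lowerCentralSeries (n + 1 + 1))) :=
              Finset.prod_congr rfl (fun σ _ => Subtype.ext rfl) }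
      try exact congrArg Subtype.val hEq

/-- Corollary `g_expression`: every `g ∈ G_i` is, modulo `G_{i+1}`, a product
over tuples `τ ∈ R^{i-1}` and `s ∈ S` of `ρ(s^{ℓ_τ(s)}, τ)`, where each `ℓ_τ : S → ℕ` has total
mass at most `Diam_S(G_ab)` and uses at most one of `s`, `s⁻¹`. -/
theorem g_coset_expression (G : Type*) [Group G] [Fintype G] (hnil : Group.IsNilpotent G)
    (S R : Finset G) (hS : ∀ s : G, s ∈ S ↔ s⁻¹ ∈ S)
    (hgen : Subgroup.closure (S : Set G) = ⊤) (hRS : R ⊆ S)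
    (hR : ∀ s ∈ S, (({s, s⁻¹} : Finset G) ∩ R).card = 1) :
    ∀ i : ℕ, 1 ≤ i → ∀ g ∈ (⊤ : Subgroup G).lowerCentralSeries (i - 1),
      ∃ ℓ : (Fin (i - 1) → G) → G → ℕ,
        (∀ τ : Fin (i - 1) → G, (∀ j, τ j ∈ R) →
          (∑ s ∈ S, ℓ τ s) ≤ quotDiam (S : Set G) (Set.univ : Set G) (commutator G : Set G) ∧
            ∀ s ∈ S, s ≠ s⁻¹ → ℓ τ s * ℓ τ s⁻¹ = 0) ∧
        QuotientGroup.mk' ((⊤ : Subgroup G).lowerCentralSeries i) g =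
          ((Finset.univ : Finset (Fin (i - 1) → {x // x ∈ R})).toList.map (fun τ =>
            (S.toList.map (fun s =>
              QuotientGroup.mk' ((⊤ : Subgroup G).lowerCentralSeries i)
                (rho (s ^ ℓ (fun j => (τ j : G)) s)
                  (List.ofFn (fun j => ((τ j : G))))))).prod)).prod := by
  intro i hi
  obtain ⟨n, rfl⟩ : ∃ n, i = n + 1 := ⟨i - 1, (Nat.succ_pred_eq_of_pos hi).symm⟩
  intro g hg
  exact aux_main S R hS hgen hR n g hg

end
end

section
/- Let G be a finite nilpotent group of nilpotency class L and rank r. Then |G| ≤ |G_ab|^{2·r^L}. -/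
open scoped BigOperators
open scoped Classical

noncomputable section

open Subgroup commutatorElement in

lemma step_general {G : Type*} [Group G] [Finite G] (T : Finset G)
    (hT : Subgroup.closure ((T : Set G) ∪ (T : Set G)⁻¹) = ⊤)
    (H K M : Subgroup G) [K.Normal] [M.Normal]
    (hK : K = ⁅H, (⊤ : Subgroup G)⁆) (hM : M = ⁅K, (⊤ : Subgroup G)⁆) :
    M.relIndex K ≤ K.relIndex H ^ T.card := by
  have hMcomm : ∀ x ∈ K, ∀ g : G, ⁅x, g⁆ ∈ M := by
    intro x hx g; rw [hM]; exact commutator_mem_commutator hx (mem_top g)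
  have memK : ∀ (x : H) (s : G), ⁅(x:G), s⁆ ∈ K := by
    intro x s; rw [hK]; exact commutator_mem_commutator x.2 (mem_top s)
  -- commutativity of K ⧸ M
  have comm2 : ∀ a b : K ⧸ M.subgroupOf K, a * b = b * a := by
    intro a b
    induction a using QuotientGroup.induction_on with | _ x => ?_
    induction b using QuotientGroup.induction_on with | _ y => ?_
    rw [← QuotientGroup.mk_mul, ← QuotientGroup.mk_mul, QuotientGroup.eq, mem_subgroupOf]
    have hc : (((x*y)⁻¹ * (y*x) : K) : G) = ⁅((y:G))⁻¹, ((x:G))⁻¹⁆ := by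
      push_cast [commutatorElement_def]; group
    rw [hc]
    exact hMcomm _ (K.inv_mem y.2) _
  -- the homomorphisms H →* K ⧸ M, x ↦ [x,s]
  let f : ∀ s : G, H →* K ⧸ M.subgroupOf K := fun s => {
    toFun := fun x => QuotientGroup.mk ⟨⁅(x:G), s⁆, memK x s⟩
    map_one' := by
      rw [QuotientGroup.eq_one_iff, mem_subgroupOf]
      simpa using M.one_mem
    map_mul' := by
      intro x y
      rw [← QuotientGroup.mk_mul, QuotientGroup.eq, mem_subgroupOf]
      have key : ((( ⟨⁅((x*y : H):G), s⁆, memK (x*y) s⟩ : K)⁻¹ *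
          (⟨⁅(x:G), s⁆, memK x s⟩ * ⟨⁅(y:G), s⁆, memK y s⟩) : K) : G)
          = (⁅(x:G),s⁆⁻¹ * ⁅(x:G), ⁅(y:G),s⁆⁻¹⁆ * ⁅(x:G),s⁆) * ⁅⁅(x:G),s⁆⁻¹, ⁅(y:G),s⁆⁻¹⁆ := by
        push_cast [commutatorElement_def]; group
      rw [key]
      have m1 : ⁅(x:G), ⁅(y:G),s⁆⁻¹⁆ ∈ M := by
        rw [← commutatorElement_inv]
        exact M.inv_mem (hMcomm _ (K.inv_mem (memK y s)) _)
      have m2 : ⁅⁅(x:G),s⁆⁻¹, ⁅(y:G),s⁆⁻¹⁆ ∈ M := hMcomm _ (K.inv_mem (memK x s)) _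
      exact M.mul_mem (by simpa using ‹M.Normal›.conj_mem _ m1 ⁅(x:G),s⁆⁻¹) m2 }
  have hker : ∀ s : G, K.subgroupOf H ≤ (f s).ker := by
    intro s x hx
    rw [MonoidHom.mem_ker]
    show QuotientGroup.mk (⟨⁅(x:G), s⁆, memK x s⟩ : K) = 1
    rw [QuotientGroup.eq_one_iff, mem_subgroupOf]
    exact hMcomm _ (mem_subgroupOf.mp hx) s
  let fbar : ∀ s : G, (H ⧸ K.subgroupOf H) →* K ⧸ M.subgroupOf K :=
    fun s => QuotientGroup.lift _ (f s) (hker s)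
  have hcommPair : Pairwise fun (s t : T) => ∀ (x y : H ⧸ K.subgroupOf H),
      Commute (fbar s x) (fbar t y) := fun s t _ x y => comm2 _ _
  -- surjectivity
  have hsurj : Function.Surjective (MonoidHom.noncommPiCoprod (fun s : T => fbar s) hcommPair) := by
    rw [← MonoidHom.range_eq_top, MonoidHom.noncommPiCoprod_range, eq_top_iff]
    intro q _
    induction q using QuotientGroup.induction_on with | _ k => ?_
    set R : Subgroup (K ⧸ M.subgroupOf K) := ⨆ s : T, (fbar s).range with hR
    suffices hsub : K ≤ ((R.comap (QuotientGroup.mk' (M.subgroupOf K))).map K.subtype) by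
      obtain ⟨k', hk', hkk⟩ := hsub k.2
      have : k' = k := Subtype.ext hkk
      subst this
      exact mem_comap.mp hk'
    refine le_trans (le_of_eq hK) ((Subgroup.commutator_le).mpr ?_)
    intro h hh g _
    -- second-variable homomorphism ψ : G →* K ⧸ M
    have memK2 : ∀ g : G, ⁅h, g⁆ ∈ K := by
      intro g; rw [hK]; exact commutator_mem_commutator hh (mem_top g)
    let ψ : G →* K ⧸ M.subgroupOf K := {
      toFun := fun g => QuotientGroup.mk ⟨⁅h, g⁆, memK2 g⟩
      map_one' := by
        rw [QuotientGroup.eq_one_iff, mem_subgroupOf]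
        simpa using M.one_mem
      map_mul' := by
        intro g g'
        rw [← QuotientGroup.mk_mul, QuotientGroup.eq, mem_subgroupOf]
        have key : ((( ⟨⁅h, g*g'⁆, memK2 (g*g')⟩ : K)⁻¹ *
            (⟨⁅h, g⁆, memK2 g⟩ * ⟨⁅h, g'⁆, memK2 g'⟩) : K) : G)
            = ⁅⁅h,g'⁆⁻¹, g⁆⁻¹ := by
          push_cast [commutatorElement_def]; group
        rw [key]
        exact M.inv_mem (hMcomm _ (K.inv_mem (memK2 g')) _) }
    have hψR : ∀ t : G, t ∈ Subgroup.closure ((T : Set G) ∪ (T : Set G)⁻¹) → ψ t ∈ R := by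
      intro t ht
      have hle : Subgroup.closure ((T : Set G) ∪ (T : Set G)⁻¹) ≤ R.comap ψ := by
        rw [Subgroup.closure_le]
        rintro t (ht | ht)
        · exact mem_comap.mpr (mem_iSup_of_mem (⟨t, ht⟩ : T)
            ⟨QuotientGroup.mk ⟨h, hh⟩, show fbar t (QuotientGroup.mk ⟨h, hh⟩) = ψ t from rfl⟩)
        · rw [Set.mem_inv] at ht
          refine mem_comap.mpr ?_
          have h1 : ψ t = (ψ t⁻¹)⁻¹ := by rw [← map_inv, inv_inv]
          rw [h1]
          exact R.inv_mem (mem_iSup_of_mem (⟨t⁻¹, ht⟩ : T)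
            ⟨QuotientGroup.mk ⟨h, hh⟩, show fbar t⁻¹ (QuotientGroup.mk ⟨h, hh⟩) = ψ t⁻¹ from rfl⟩)
      exact mem_comap.mp (hle ht)
    have hg : ψ g ∈ R := hψR g (by rw [hT]; trivial)
    exact ⟨⟨⁅h, g⁆, memK2 g⟩, mem_comap.mpr hg, rfl⟩
  -- cardinality
  have hcard := Nat.card_le_card_of_surjective _ hsurj
  rw [Nat.card_pi] at hcard
  simp only [Finset.prod_const, Finset.card_univ, Fintype.card_coe] at hcard
  exact hcard


open Subgroup in

lemma telescope_card {G : Type*} [Group G] [Finite G] (L : ℕ)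
    (hL : (⊤ : Subgroup G).lowerCentralSeries L = ⊥) :
    Nat.card G = ∏ i ∈ Finset.range L,
      ((⊤ : Subgroup G).lowerCentralSeries (i+1)).relIndex ((⊤ : Subgroup G).lowerCentralSeries i) := by
  have key : ∀ j, ((⊤ : Subgroup G).lowerCentralSeries j).index = ∏ i ∈ Finset.range j,
      ((⊤ : Subgroup G).lowerCentralSeries (i+1)).relIndex ((⊤ : Subgroup G).lowerCentralSeries i) := by
    intro j
    induction j with
    | zero => simp [Subgroup.lowerCentralSeries_zero]
    | succ n ih =>
      rw [Finset.prod_range_succ, ← ih, mul_comm,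
        Subgroup.relIndex_mul_index (Subgroup.lowerCentralSeries_antitone ⊤ (Nat.le_succ n))]
  rw [← key L, hL, Subgroup.index_bot]

lemma geom_sum_le (r L : ℕ) (hr : 2 ≤ r) :
    ∑ i ∈ Finset.range L, r ^ i ≤ 2 * r ^ L := by
  induction L with
  | zero => simp
  | succ n ih =>
    rw [Finset.sum_range_succ, pow_succ]
    calc (∑ i ∈ Finset.range n, r ^ i) + r ^ n ≤ 2 * r ^ n + r ^ n := by omega
      _ = 3 * r ^ n := by ring
      _ ≤ 2 * (r ^ n * r) := by nlinarith [pow_pos (by omega : 0 < r) n]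


/-- Corollary `ab_size`, second part: `|G| ≤ |G_ab|^{2 r^L}`. -/
theorem card_le_ab_pow (G : Type*) [Group G] [Fintype G] (L r : ℕ)
    (hL : NilpotencyClassEq G L) (hr : HasRank G r) :
    Nat.card G ≤ (commutator G).index ^ (2 * r ^ L) := by
  obtain ⟨hLbot, hLne⟩ := hL
  obtain ⟨⟨T, hTcard, hTgen⟩, -⟩ := hr
  rcases Nat.eq_zero_or_pos r with rfl | hrpos
  · exfalso
    rw [Finset.card_eq_zero] at hTcard
    subst hTcard
    simp only [Finset.coe_empty, Set.inv_empty, Set.union_empty,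
      Subgroup.closure_empty] at hTgen
    exact hLne (le_bot_iff.mp (hTgen ▸ (le_top : (⊤ : Subgroup G).lowerCentralSeries (L-1) ≤ ⊤)))
  rcases eq_or_lt_of_le (Nat.succ_le_of_lt hrpos) with hr1 | hr2
  · -- r = 1 : G is cyclic, hence abelian
    obtain ⟨t, rfl⟩ : ∃ t, T = {t} := Finset.card_eq_one.mp (hTcard.trans hr1.symm)
    have habel : ∀ a b : G, a * b = b * a := by
      have hsub : (⊤ : Subgroup G) ≤ Subgroup.zpowers t := by
        rw [← hTgen, Subgroup.closure_le]
        rintro x (hx | hx)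
        · simp only [Finset.coe_singleton, Set.mem_singleton_iff] at hx
          rw [hx]; exact Subgroup.mem_zpowers t
        · rw [Set.mem_inv, Finset.coe_singleton, Set.mem_singleton_iff] at hx
          have : x = t⁻¹ := by rw [← inv_inv x, hx]
          subst this; exact (Subgroup.zpowers t).inv_mem (Subgroup.mem_zpowers t)
      intro a b
      obtain ⟨m, hm⟩ := hsub (Subgroup.mem_top a)
      obtain ⟨n, hn⟩ := hsub (Subgroup.mem_top b)
      rw [← hm, ← hn]
      exact ((Commute.refl t).zpow_zpow m n)
    have hcomm : commutator G = ⊥ := by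
      rw [commutator_def]
      exact le_bot_iff.mp ((Subgroup.commutator_le).mpr fun a _ b _ =>
        Subgroup.mem_bot.mpr (commutatorElement_eq_one_iff_mul_comm.mpr (habel a b)))
    rw [hcomm, Subgroup.index_bot]
    exact Nat.le_self_pow (by positivity) _
  · -- 2 ≤ r
    have hstep : ∀ i : ℕ, ((⊤ : Subgroup G).lowerCentralSeries (i+2)).relIndex ((⊤ : Subgroup G).lowerCentralSeries (i+1)) ≤
        (((⊤ : Subgroup G).lowerCentralSeries (i+1)).relIndex ((⊤ : Subgroup G).lowerCentralSeries i)) ^ r := by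
      intro i
      rw [← hTcard]
      exact step_general T hTgen ((⊤ : Subgroup G).lowerCentralSeries i) _ _ rfl rfl
    have hd0 : ((⊤ : Subgroup G).lowerCentralSeries 1).relIndex ((⊤ : Subgroup G).lowerCentralSeries 0) =
        (commutator G).index := by
      rw [lowerCentralSeries_zero, Subgroup.relIndex_top_right, lowerCentralSeries_one]
    have hdi : ∀ i : ℕ, ((⊤ : Subgroup G).lowerCentralSeries (i+1)).relIndex ((⊤ : Subgroup G).lowerCentralSeries i)
        ≤ (commutator G).index ^ (r ^ i) := by
      intro i
      induction i with
      | zero => rw [hd0, pow_zero, pow_one]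
      | succ n ih =>
        calc ((⊤ : Subgroup G).lowerCentralSeries (n+2)).relIndex ((⊤ : Subgroup G).lowerCentralSeries (n+1))
            ≤ (((⊤ : Subgroup G).lowerCentralSeries (n+1)).relIndex ((⊤ : Subgroup G).lowerCentralSeries n)) ^ r := hstep n
          _ ≤ ((commutator G).index ^ (r ^ n)) ^ r := Nat.pow_le_pow_left ih r
          _ = (commutator G).index ^ (r ^ (n+1)) := by rw [← pow_mul, pow_succ]
    calc Nat.card G
        = ∏ i ∈ Finset.range L,
            ((⊤ : Subgroup G).lowerCentralSeries (i+1)).relIndex ((⊤ : Subgroup G).lowerCentralSeries i) :=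
          telescope_card L hLbot
      _ ≤ ∏ i ∈ Finset.range L, (commutator G).index ^ (r ^ i) :=
          Finset.prod_le_prod' (fun i _ => hdi i)
      _ = (commutator G).index ^ (∑ i ∈ Finset.range L, r ^ i) := by
          rw [Finset.prod_pow_eq_pow_sum]
      _ ≤ (commutator G).index ^ (2 * r ^ L) :=
          Nat.pow_le_pow_right (Nat.one_le_iff_ne_zero.mpr Subgroup.index_ne_zero_of_finite)
            (geom_sum_le r L hr2)

end
end

section
/- Let G be a finite nilpotent group with lower central series (G_i), let ℓ ≥ 1, and let R_ℓ ⊆ G_ℓ be a set of coset representatives for G_ℓ/G_{ℓ+1} (the quotient map restricts to a bijection from R_ℓ onto G_ℓ/G_{ℓ+1}). Fix n ≥ 1 and h₁, …, h_n ∈ G, and let J be the subgroup of G_{ℓ+1}/G_{ℓ+2} generated by { [h_i, g]·G_{ℓ+2} : 1 ≤ i ≤ n, g ∈ R_ℓ }. Then for every element q of G_{ℓ+1}/G_{ℓ+2}, the number of tuples (u₁, …, u_n) ∈ R_ℓ^n with ( ∏_{i=1}^{n} [h_i, u_i] )·G_{ℓ+2} = q equals |R_ℓ|^n / |J| if q ∈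 J, and equals 0 otherwise. Equivalently, if U₁, …, U_n are independent uniform random elements of R_ℓ, then ( ∏_{i=1}^{n} [h_i, U_i] )·G_{ℓ+2} is uniformly distributed on J. -/
open scoped BigOperators
open scoped Classical

noncomputable section

section Aux

/-- Fibers of a group hom from a finite group are uniform over the range. -/
lemma fiber_card_hom {A B : Type*} [Group A] [Group B] [Finite A] (φ : A →* B) (q : B) :
    Nat.card {a : A // φ a = q} =
      if q ∈ φ.range then Nat.card A / Nat.card φ.range else 0 := by
  split_ifs with hq
  · obtain ⟨a₀, ha₀⟩ := hq
    have e : {a : A // φ a = q} ≃ φ.ker :=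
      { toFun := fun a => ⟨a₀⁻¹ * a.1, by
          simp [MonoidHom.mem_ker, ha₀, a.2]⟩
        invFun := fun k => ⟨a₀ * k.1, by
          have hk := k.2
          rw [MonoidHom.mem_ker] at hk
          simp [hk, ha₀]⟩
        left_inv := fun a => by simp
        right_inv := fun k => by simp }
    rw [Nat.card_congr e]
    have h1 : Nat.card A = Nat.card (A ⧸ φ.ker) * Nat.card φ.ker :=
      Subgroup.card_eq_card_quotient_mul_card_subgroup _
    have h2 : Nat.card (A ⧸ φ.ker) = Nat.card φ.range :=
      Nat.card_congr (QuotientGroup.quotientKerEquivRange φ).toEquiv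
    have hpos : 0 < Nat.card φ.range := by
      have : Finite (A ⧸ φ.ker) := Quotient.finite _
      have : Finite φ.range := Finite.of_equiv _ (QuotientGroup.quotientKerEquivRange φ).toEquiv
      exact Nat.card_pos
    rw [h1, h2, Nat.mul_div_cancel_left _ hpos]
  · have : IsEmpty {a : A // φ a = q} := ⟨fun a => hq ⟨a.1, a.2⟩⟩
    simp [Nat.card_of_isEmpty]

end Aux

open scoped commutatorElement IsMulCommutative

/-- Lemma `unif_span`: if `U₁,…,U_n` are independent uniform on the set of
coset representatives `R_ℓ`, then `(∏ᵢ [hᵢ, Uᵢ])·G_{ℓ+2}` is uniform on the subgroup `J`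
generated by `{[hᵢ, g]·G_{ℓ+2}}`; equivalently, the number of tuples `u ∈ R_ℓⁿ` whose product of
commutators lands in the class `q` is `|R_ℓ|ⁿ/|J|` for `q ∈ J` and `0` otherwise. -/
theorem commutator_product_uniform (G : Type*) [Group G] [Fintype G]
    (hnil : Group.IsNilpotent G) (ℓ : ℕ) (hℓ1 : 1 ≤ ℓ)
    (R : Set G) (hRsub : R ⊆ ((⊤ : Subgroup G).lowerCentralSeries (ℓ - 1) : Set G))
    (hRrep : Set.BijOn (QuotientGroup.mk' ((⊤ : Subgroup G).lowerCentralSeries ℓ)) R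
      ((QuotientGroup.mk' ((⊤ : Subgroup G).lowerCentralSeries ℓ)) '' ((⊤ : Subgroup G).lowerCentralSeries (ℓ - 1) : Set G)))
    (n : ℕ) (hn : 1 ≤ n) (h : Fin n → G) :
    ∀ q : G ⧸ (⊤ : Subgroup G).lowerCentralSeries (ℓ + 1),
      (Nat.card {u : Fin n → G // (∀ i, u i ∈ R) ∧
          QuotientGroup.mk' ((⊤ : Subgroup G).lowerCentralSeries (ℓ + 1))
            ((List.ofFn (fun i => pcomm (h i) (u i))).prod) = q} : ℝ) =
        if q ∈ Subgroup.closure ((QuotientGroup.mk' ((⊤ : Subgroup G).lowerCentralSeries (ℓ + 1))) ''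
              {x | ∃ i : Fin n, ∃ g ∈ R, x = pcomm (h i) g})
        then (R.ncard : ℝ) ^ n /
          (Nat.card (↥(Subgroup.closure ((QuotientGroup.mk' ((⊤ : Subgroup G).lowerCentralSeries (ℓ + 1))) ''
            {x | ∃ i : Fin n, ∃ g ∈ R, x = pcomm (h i) g}))) : ℝ)
        else 0 := by
  classical
  set P := (⊤ : Subgroup G).lowerCentralSeries (ℓ - 1) with hP
  set M := (⊤ : Subgroup G).lowerCentralSeries ℓ with hM
  set N := (⊤ : Subgroup G).lowerCentralSeries (ℓ + 1) with hNdef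
  set J := Subgroup.closure ((QuotientGroup.mk' N) ''
      {x | ∃ i : Fin n, ∃ g ∈ R, x = pcomm (h i) g}) with hJdef
  intro q
  have hMP : M ≤ P := Subgroup.lowerCentralSeries_antitone ⊤ (Nat.sub_le ℓ 1)
  -- pcomm membership facts
  have hpcomm_eq : ∀ x y : G, pcomm x y = ⁅y⁻¹, x⁻¹⁆⁻¹ := by
    intro x y
    rw [commutatorElement_inv]
    simp [pcomm, commutatorElement_def, mul_assoc]
  have hpcomm_eq2 : ∀ x y : G, pcomm x y = ⁅x⁻¹, y⁻¹⁆ := by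
    intro x y
    simp [pcomm, commutatorElement_def, mul_assoc]
  have hpcM : ∀ (g : G) {u : G}, u ∈ P → pcomm g u ∈ M := by
    intro g u hu
    rw [hpcomm_eq, hM, ← Nat.sub_add_cancel hℓ1]
    exact inv_mem (Subgroup.commutator_mem_commutator (inv_mem hu) (Subgroup.mem_top _))
  have hpcN : ∀ (g : G) {u : G}, u ∈ M → pcomm g u ∈ N := by
    intro g u hu
    rw [hpcomm_eq, hNdef]
    exact inv_mem (Subgroup.commutator_mem_commutator (inv_mem hu) (Subgroup.mem_top _))
  -- centrality
  have hcent : ∀ {m : G}, m ∈ M →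
      (QuotientGroup.mk' N) m ∈ Subgroup.center (G ⧸ N) := by
    intro m hm
    rw [Subgroup.mem_center_iff]
    intro x
    obtain ⟨g, rfl⟩ := QuotientGroup.mk'_surjective N x
    have hpc : pcomm m g ∈ N := by
      rw [hpcomm_eq2, hNdef]
      exact Subgroup.commutator_mem_commutator (inv_mem hm) (Subgroup.mem_top _)
    have key : ((g * m : G) : G ⧸ N) = ((m * g : G) : G ⧸ N) := by
      rw [QuotientGroup.eq]
      have : (g * m)⁻¹ * (m * g) = pcomm m g := by
        simp only [pcomm]; group
      rw [this]; exact hpc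
    simpa [QuotientGroup.mk'_apply, QuotientGroup.mk_mul] using key
  -- the homomorphisms ψ i : ↥P →* center
  have hmul : ∀ (g : G) (u v : ↥P),
      (QuotientGroup.mk' N) (pcomm g ((u : G) * v)) =
        (QuotientGroup.mk' N) (pcomm g u) * (QuotientGroup.mk' N) (pcomm g v) := by
    intro g u v
    have key : pcomm g ((u : G) * v) = pcomm g v * ((v : G)⁻¹ * pcomm g u * v) := by
      simp only [pcomm]; group
    have c1 := Subgroup.mem_center_iff.1 (hcent (hpcM g u.2))
    have c2 := Subgroup.mem_center_iff.1 (hcent (hpcM g v.2))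
    have h3 : ∀ (a c : G ⧸ N), (∀ g : G ⧸ N, g * c = c * g) → a⁻¹ * c * a = c := by
      intro a c hc
      rw [mul_assoc, ← hc a, inv_mul_cancel_left]
    rw [key, map_mul, map_mul, map_mul, map_inv, h3 _ _ c1]
    exact (c2 _).symm
  let ψ : Fin n → ↥P →* ↥(Subgroup.center (G ⧸ N)) := fun i =>
    MonoidHom.mk' (fun u => ⟨(QuotientGroup.mk' N) (pcomm (h i) u), hcent (hpcM (h i) u.2)⟩)
      (fun u v => Subtype.ext (hmul (h i) u v))
  let M' : Subgroup ↥P := M.subgroupOf P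
  haveI : M'.Normal := Subgroup.normal_subgroupOf
  let ψbar : Fin n → (↥P ⧸ M') →* ↥(Subgroup.center (G ⧸ N)) := fun i =>
    QuotientGroup.lift M' (ψ i) (by
      intro x hx
      rw [MonoidHom.mem_ker]
      apply Subtype.ext
      show (QuotientGroup.mk' N) (pcomm (h i) (x : G)) = 1
      rw [QuotientGroup.mk'_apply, QuotientGroup.eq_one_iff]
      exact hpcN (h i) (Subgroup.mem_subgroupOf.1 hx))
  let F : (Fin n → ↥P ⧸ M') →* ↥(Subgroup.center (G ⧸ N)) :=
    ∏ i : Fin n, (ψbar i).comp (Pi.evalMonoidHom (fun _ => ↥P ⧸ M') i)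
  have hFapply : ∀ w, F w = ∏ i, ψbar i (w i) := by
    intro w
    simp [F, MonoidHom.finset_prod_apply]
  let F' : (Fin n → ↥P ⧸ M') →* G ⧸ N := (Subgroup.center (G ⧸ N)).subtype.comp F
  -- the equivalence R ≃ P ⧸ M'
  have hefact : ∀ (x y : ↥P), ((x : ↥P ⧸ M') = (y : ↥P ⧸ M')) ↔
      (QuotientGroup.mk' M) (x : G) = (QuotientGroup.mk' M) (y : G) := by
    intro x y
    rw [QuotientGroup.eq, QuotientGroup.mk'_apply, QuotientGroup.mk'_apply, QuotientGroup.eq]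
    rw [Subgroup.mem_subgroupOf]
    simp
  let e : ↥R → ↥P ⧸ M' := fun r => QuotientGroup.mk (⟨r.1, hRsub r.2⟩ : ↥P)
  have einj : Function.Injective e := by
    intro r r' hrr
    exact Subtype.ext (hRrep.injOn r.2 r'.2 ((hefact _ _).1 hrr))
  have esurj : Function.Surjective e := by
    intro w
    obtain ⟨p, rfl⟩ := QuotientGroup.mk_surjective w
    obtain ⟨r, hrR, hr⟩ := hRrep.surjOn ⟨(p : G), p.2, rfl⟩
    exact ⟨⟨r, hrR⟩, (hefact _ _).2 hr⟩
  let E : ↥R ≃ (↥P ⧸ M') := Equiv.ofBijective e ⟨einj, esurj⟩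
  -- key equation
  have keyEq : ∀ (u : Fin n → G) (hu : ∀ i, u i ∈ R),
      (QuotientGroup.mk' N) ((List.ofFn fun i => pcomm (h i) (u i)).prod) =
        F' (fun i => e ⟨u i, hu i⟩) := by
    intro u hu
    have step1 : (QuotientGroup.mk' N) ((List.ofFn fun i => pcomm (h i) (u i)).prod) =
        (List.ofFn fun i => (QuotientGroup.mk' N) (pcomm (h i) (u i))).prod := by
      rw [map_list_prod, List.map_ofFn]
      rfl
    have step2 : F' (fun i => e ⟨u i, hu i⟩) =
        (Subgroup.center (G ⧸ N)).subtype (∏ i, ψ i ⟨u i, hRsub (hu i)⟩) := by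
      show (Subgroup.center (G ⧸ N)).subtype (F _) = _
      rw [hFapply]
      congr 1
    rw [step1, step2, ← List.prod_ofFn, map_list_prod, List.map_ofFn]
    rfl
  -- range F' = J
  have hrange : F'.range = J := by
    apply le_antisymm
    · rintro _ ⟨w, rfl⟩
      have hmemJ : ∀ (i : Fin n) (v : ↥P ⧸ M'),
          ψbar i v ∈ J.comap (Subgroup.center (G ⧸ N)).subtype := by
        intro i v
        obtain ⟨p, rfl⟩ := QuotientGroup.mk_surjective v
        obtain ⟨r, hrR, hr⟩ := hRrep.surjOn ⟨(p : G), p.2, rfl⟩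
        have hcast : (QuotientGroup.mk p : ↥P ⧸ M') = QuotientGroup.mk (⟨r, hRsub hrR⟩ : ↥P) :=
          (hefact _ _).2 hr.symm
        have : ψbar i (QuotientGroup.mk p) = ψ i ⟨r, hRsub hrR⟩ := by
          rw [hcast]; rfl
        rw [Subgroup.mem_comap, this]
        apply Subgroup.subset_closure
        exact ⟨pcomm (h i) r, ⟨i, r, hrR, rfl⟩, rfl⟩
      have : F w ∈ J.comap (Subgroup.center (G ⧸ N)).subtype := by
        rw [hFapply]
        exact Subgroup.prod_mem _ fun i _ => hmemJ i (w i)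
      exact Subgroup.mem_comap.1 this
    · rw [hJdef]
      rw [Subgroup.closure_le]
      rintro _ ⟨x, ⟨i, g, hgR, rfl⟩, rfl⟩
      refine ⟨Pi.mulSingle i (e ⟨g, hgR⟩), ?_⟩
      have hFs : F (Pi.mulSingle i (e ⟨g, hgR⟩)) = ψ i ⟨g, hRsub hgR⟩ := by
        rw [hFapply]
        rw [Finset.prod_eq_single i]
        · rw [Pi.mulSingle_eq_same]; rfl
        · intro j _ hj; rw [Pi.mulSingle_eq_of_ne hj, map_one]
        · intro hi; exact absurd (Finset.mem_univ i) hi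
      show (Subgroup.center (G ⧸ N)).subtype (F _) = _
      rw [hFs]
      rfl
  -- the equivalence of counting sets
  have hequiv : {u : Fin n → G // (∀ i, u i ∈ R) ∧
        QuotientGroup.mk' N ((List.ofFn (fun i => pcomm (h i) (u i))).prod) = q} ≃
      {w : Fin n → ↥P ⧸ M' // F' w = q} :=
    { toFun := fun u => ⟨fun i => e ⟨u.1 i, u.2.1 i⟩, by
        rw [← keyEq u.1 u.2.1]; exact u.2.2⟩
      invFun := fun w => ⟨fun i => ((E.symm (w.1 i)) : G), by
        refine ⟨fun i => (E.symm (w.1 i)).2, ?_⟩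
        rw [keyEq _ (fun i => (E.symm (w.1 i)).2)]
        have hfun : (fun i => e ⟨((E.symm (w.1 i)) : G), (E.symm (w.1 i)).2⟩) = w.1 := by
          funext i
          exact E.apply_symm_apply (w.1 i)
        rw [hfun]; exact w.2⟩
      left_inv := fun u => by
        apply Subtype.ext; funext i
        show ((E.symm (E ⟨u.1 i, u.2.1 i⟩)) : G) = u.1 i
        rw [E.symm_apply_apply]
      right_inv := fun w => by
        apply Subtype.ext; funext i
        exact E.apply_symm_apply (w.1 i) }
  have hcard : Nat.card {u : Fin n → G // (∀ i, u i ∈ R) ∧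
        QuotientGroup.mk' N ((List.ofFn (fun i => pcomm (h i) (u i))).prod) = q} =
      Nat.card {w : Fin n → ↥P ⧸ M' // F' w = q} := Nat.card_congr hequiv
  rw [hcard, fiber_card_hom F' q, hrange]
  -- cardinalities
  have hA : Nat.card (Fin n → ↥P ⧸ M') = R.ncard ^ n := by
    rw [Nat.card_fun, ← Nat.card_congr E, Nat.card_coe_set_eq, Nat.card_eq_fintype_card,
      Fintype.card_fin]
  haveI : Finite (G ⧸ N) := Quotient.finite _
  have hJpos : 0 < Nat.card ↥J := Nat.card_pos
  have hdvd : Nat.card ↥J ∣ Nat.card (Fin n → ↥P ⧸ M') := by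
    refine ⟨Nat.card ↥F'.ker, ?_⟩
    have h2 : Nat.card ((Fin n → ↥P ⧸ M') ⧸ F'.ker) = Nat.card ↥J := by
      rw [← hrange]
      exact Nat.card_congr (QuotientGroup.quotientKerEquivRange F').toEquiv
    rw [Subgroup.card_eq_card_quotient_mul_card_subgroup F'.ker, h2]
  split_ifs with hq
  · rw [Nat.cast_div hdvd (by exact_mod_cast hJpos.ne')]
    rw [hA, Nat.cast_pow]
  · simp

end
end
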